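/- arXiv:1802.01902 — 4 statements merged into one kernel-verified Lean document; each statement's English description precedes it below -/
import Mathlib

section
/- Let w be a fast-growing weight, 1 ≤ p < ∞, and f ∈ L^p_w(ℝ) supported in (-∞,0] with J^k f = 0 for 1 ≤ k ≤ m. Then for each 1 ≤ k ≤ m, I^k f ∈ L¹(ℝ) and ‖I^k f‖₁ ≤ C ‖f‖_{p,w} for a constant C depending only on k, p, w. -/
open MeasureTheory Set Real

/-- Iterated antiderivative from `-∞`. -/
noncomputable def iterInt (f : ℝ → ℝ) : ℕ → ℝ → ℝ
  | 0 => f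
  | m + 1 => fun x => ∫ y in Iic x, iterInt f m y

/-- The auxiliary kernel for Fubini arguments. -/
noncomputable def Hker (g : ℝ → ℝ) (n : ℕ) (x : ℝ) : ℝ × ℝ → ℝ :=
  fun q => if q.2 ≤ q.1 ∧ q.1 ≤ x then (q.1 - q.2) ^ n * g q.2 else 0

lemma Hker_meas {g : ℝ → ℝ} (hg : Measurable g) (n : ℕ) (x : ℝ) :
    Measurable (Hker g n x) := by
  unfold Hker
  exact Measurable.ite
    ((measurableSet_le measurable_snd measurable_fst).inter
      (measurableSet_le measurable_fst measurable_const))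
    (((measurable_fst.sub measurable_snd).pow_const n).mul (hg.comp measurable_snd))
    measurable_const

lemma Hker_norm (g : ℝ → ℝ) (n : ℕ) (x : ℝ) (q : ℝ × ℝ) :
    ‖Hker g n x q‖ = Hker (fun y => |g y|) n x q := by
  unfold Hker
  by_cases h : q.2 ≤ q.1 ∧ q.1 ≤ x
  · rw [if_pos h, if_pos h, Real.norm_eq_abs, abs_mul, abs_pow,
      abs_of_nonneg (by linarith [h.1] : (0:ℝ) ≤ q.1 - q.2)]
  · simp [h]

lemma Hker_integral_y {g : ℝ → ℝ} (n : ℕ) (x t : ℝ) :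
    (∫ y, Hker g n x (t, y)) =
      if t ≤ x then ∫ y in Iic t, (t - y) ^ n * g y else 0 := by
  by_cases h : t ≤ x
  · rw [if_pos h, ← integral_indicator measurableSet_Iic]
    congr 1; funext y
    simp [Hker, Set.indicator_apply, h, mem_Iic]
  · rw [if_neg h]
    have : (fun y => Hker g n x (t, y)) = fun _ => (0:ℝ) := by
      funext y; simp only [Hker]
      rw [if_neg (by tauto)]
    rw [this, integral_zero]

lemma Hker_integral_t {g : ℝ → ℝ} (n : ℕ) (x y : ℝ) :
    (∫ t, Hker g n x (t, y)) =
      (Iic x).indicator (fun y => ((x - y) ^ (n + 1) / (n + 1)) * g y) y := by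
  by_cases h : y ≤ x
  · have hfun : (fun t => Hker g n x (t, y)) =
        fun t => (Icc y x).indicator (fun t => (t - y) ^ n) t * g y := by
      funext t
      simp [Hker, Set.indicator_apply, mem_Icc, and_comm]
    rw [hfun]
    rw [integral_mul_const, integral_indicator measurableSet_Icc]
    have hcalc : (∫ t in Icc y x, (t - y) ^ n) = (x - y) ^ (n + 1) / (n + 1) := by
      rw [integral_Icc_eq_integral_Ioc, ← intervalIntegral.integral_of_le h,
        intervalIntegral.integral_comp_sub_right (fun u => u ^ n) y, sub_self,
        integral_pow]
      simp
    rw [hcalc, Set.indicator_of_mem (mem_Iic.mpr h)]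
  · have : (fun t => Hker g n x (t, y)) = fun _ => (0:ℝ) := by
      funext t; simp only [Hker]
      rw [if_neg (by rintro ⟨h1, h2⟩; exact h (le_trans h1 h2))]
    rw [this, integral_zero, Set.indicator_of_notMem (by simpa using h)]

lemma abs_sub_le_weight (t y : ℝ) : |t - y| ≤ (1 + |t|) * (1 + |y|) := by
  have h1 : |t - y| ≤ |t| + |y| := by
    calc |t - y| = |t + -y| := by ring_nf
    _ ≤ |t| + |-y| := abs_add_le _ _
    _ = |t| + |y| := by rw [abs_neg]
  nlinarith [abs_nonneg t, abs_nonneg y]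

lemma Hker_integrable {g : ℝ → ℝ} (hg : Measurable g)
    (hgi : ∀ j : ℕ, Integrable fun y => (1 + |y|) ^ j * |g y|) (n : ℕ) (x : ℝ) :
    Integrable (Hker g n x) (volume.prod volume) := by
  rw [integrable_prod_iff' (Hker_meas hg n x).aestronglyMeasurable]
  constructor
  · refine Filter.Eventually.of_forall fun y => ?_
    by_cases h : y ≤ x
    · have hfun : (fun t => Hker g n x (t, y)) =
          fun t => (Icc y x).indicator (fun t => (t - y) ^ n) t * g y := by
        funext t; simp [Hker, Set.indicator_apply, mem_Icc, and_comm]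
      rw [hfun]
      have hint : IntegrableOn (fun t => (t - y) ^ n) (Icc y x) :=
        ((continuous_id.sub continuous_const).pow n).integrableOn_Icc
      exact ((integrable_indicator_iff measurableSet_Icc).mpr hint).mul_const _
    · have hfun : (fun t => Hker g n x (t, y)) = fun _ => (0:ℝ) := by
        funext t; simp only [Hker]
        exact if_neg (by rintro ⟨h1, h2⟩; exact h (le_trans h1 h2))
      rw [hfun]; exact integrable_zero _ _ _
  · have heq : (fun y => ∫ t, ‖Hker g n x (t, y)‖) =
        fun y => (Iic x).indicator (fun y => ((x - y) ^ (n + 1) / (n + 1)) * |g y|) y := by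
      funext y
      simp only [Hker_norm]
      exact Hker_integral_t n x y
    rw [heq]
    apply Integrable.mono' ((hgi (n + 1)).const_mul ((1 + |x|) ^ (n + 1)))
    · refine (Measurable.indicator ?_ measurableSet_Iic).aestronglyMeasurable
      exact (((measurable_const.sub measurable_id).pow_const _).div_const _).mul hg.abs
    · refine Filter.Eventually.of_forall fun y => ?_
      by_cases h : y ≤ x
      · rw [Set.indicator_of_mem (mem_Iic.mpr h)]
        have h1 : (0:ℝ) ≤ x - y := by linarith
        have h2 : (x - y) ^ (n + 1) ≤ (1 + |x|) ^ (n + 1) * (1 + |y|) ^ (n + 1) := by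
          rw [← mul_pow]
          refine pow_le_pow_left₀ h1 ?_ _
          calc x - y ≤ |x - y| := le_abs_self _
          _ ≤ _ := abs_sub_le_weight x y
        have h3 : (0:ℝ) ≤ (x - y) ^ (n + 1) / (n + 1) * |g y| :=
          mul_nonneg (div_nonneg (pow_nonneg h1 _) (by positivity)) (abs_nonneg _)
        rw [Real.norm_eq_abs, abs_of_nonneg h3]
        calc (x - y) ^ (n + 1) / (n + 1) * |g y| ≤ (x - y) ^ (n + 1) * |g y| := by
              apply mul_le_mul_of_nonneg_right _ (abs_nonneg _)
              apply div_le_self (pow_nonneg h1 _)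
              exact_mod_cast Nat.one_le_iff_ne_zero.mpr (Nat.succ_ne_zero n)
        _ ≤ (1 + |x|) ^ (n + 1) * (1 + |y|) ^ (n + 1) * |g y| :=
              mul_le_mul_of_nonneg_right h2 (abs_nonneg _)
        _ = (1 + |x|) ^ (n + 1) * ((1 + |y|) ^ (n + 1) * |g y|) := by ring
      · rw [Set.indicator_of_notMem (by simpa using h)]
        simp only [norm_zero]
        positivity

lemma Hker_swap {g : ℝ → ℝ} (hg : Measurable g)
    (hgi : ∀ j : ℕ, Integrable fun y => (1 + |y|) ^ j * |g y|) (n : ℕ) (x : ℝ) :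
    (∫ t, ∫ y, Hker g n x (t, y)) = ∫ y in Iic x, ((x - y) ^ (n + 1) / (n + 1)) * g y := by
  have hint : Integrable (Function.uncurry fun t y => Hker g n x (t, y))
      (volume.prod volume) := by
    exact Hker_integrable hg hgi n x
  rw [MeasureTheory.integral_integral_swap hint]
  calc (∫ y, ∫ t, Hker g n x (t, y))
      = ∫ y, (Iic x).indicator (fun y => ((x - y) ^ (n + 1) / (n + 1)) * g y) y := by
        congr 1; funext y; exact Hker_integral_t n x y
    _ = _ := integral_indicator measurableSet_Iic

lemma poly_mul_integrable {f : ℝ → ℝ} (hf : Measurable f)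
    (hfi : ∀ j : ℕ, Integrable fun y => (1 + |y|) ^ j * |f y|) (n : ℕ) (t : ℝ) :
    Integrable (fun y => (t - y) ^ n * f y) := by
  apply Integrable.mono' ((hfi n).const_mul ((1 + |t|) ^ n))
  · exact (((measurable_const.sub measurable_id).pow_const n).mul hf).aestronglyMeasurable
  · refine Filter.Eventually.of_forall fun y => ?_
    rw [Real.norm_eq_abs, abs_mul, abs_pow]
    calc |t - y| ^ n * |f y| ≤ ((1 + |t|) * (1 + |y|)) ^ n * |f y| :=
          mul_le_mul_of_nonneg_right (pow_le_pow_left₀ (abs_nonneg _) (abs_sub_le_weight t y) n)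
            (abs_nonneg _)
    _ = (1 + |t|) ^ n * ((1 + |y|) ^ n * |f y|) := by rw [mul_pow]; ring

lemma cauchy_formula {f : ℝ → ℝ} (hf : Measurable f)
    (hfi : ∀ j : ℕ, Integrable fun y => (1 + |y|) ^ j * |f y|) :
    ∀ (n : ℕ) (x : ℝ), iterInt f (n + 1) x =
      (1 / (n.factorial : ℝ)) * ∫ y in Iic x, (x - y) ^ n * f y := by
  intro n
  induction n with
  | zero =>
    intro x
    show (∫ y in Iic x, f y) = _
    simp
  | succ n ih =>
    intro x
    show (∫ t in Iic x, iterInt f (n + 1) t) = _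
    have h1 : (∫ t in Iic x, iterInt f (n + 1) t) =
        ∫ t in Iic x, (1 / (n.factorial : ℝ)) * ∫ y in Iic t, (t - y) ^ n * f y := by
      apply integral_congr_ae
      filter_upwards with t using ih t
    rw [h1, integral_const_mul]
    have h2 : (∫ t in Iic x, ∫ y in Iic t, (t - y) ^ n * f y) =
        ∫ t, ∫ y, Hker f n x (t, y) := by
      rw [← integral_indicator (measurableSet_Iic (a := x))]
      congr 1; funext t
      rw [Hker_integral_y, Set.indicator_apply]
      simp [mem_Iic]
    rw [h2, Hker_swap hf hfi n x]
    have h3 : (∫ y in Iic x, ((x - y) ^ (n + 1) / (n + 1)) * f y) =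
        (1 / ((n:ℝ) + 1)) * ∫ y in Iic x, (x - y) ^ (n + 1) * f y := by
      rw [← integral_const_mul]
      congr 1; funext y; ring
    rw [h3, Nat.factorial_succ]
    push_cast
    rw [← mul_assoc]
    congr 1
    have hn : ((n:ℝ) + 1) ≠ 0 := by positivity
    have hnf : ((n.factorial : ℝ)) ≠ 0 := Nat.cast_ne_zero.mpr n.factorial_ne_zero
    field_simp

lemma moment_vanish {f : ℝ → ℝ} (hf : Measurable f)
    (hfi : ∀ j : ℕ, Integrable fun y => (1 + |y|) ^ j * |f y|)
    (hsupp : Function.support f ⊆ Iic (0 : ℝ)) (n : ℕ)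
    (hmom : ∀ i : ℕ, i ≤ n → ∫ y in Iic (0 : ℝ), (-y) ^ i * f y = 0) :
    ∀ t : ℝ, 0 ≤ t → (∫ y in Iic t, (t - y) ^ n * f y) = 0 := by
  intro t ht
  have hmono : ∀ i : ℕ, i ≤ n → Integrable (fun y => (-y) ^ i * f y) := by
    intro i hi
    apply Integrable.mono' (hfi n)
    · exact (((measurable_id.neg).pow_const i).mul hf).aestronglyMeasurable
    · refine Filter.Eventually.of_forall fun y => ?_
      rw [Real.norm_eq_abs, abs_mul, abs_pow, abs_neg]
      refine mul_le_mul_of_nonneg_right ?_ (abs_nonneg _)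
      calc |y| ^ i ≤ (1 + |y|) ^ i :=
            pow_le_pow_left₀ (abs_nonneg _) (by linarith [abs_nonneg y]) i
      _ ≤ (1 + |y|) ^ n := pow_le_pow_right₀ (by linarith [abs_nonneg y]) hi
  have hsplit : Iic t = Iic (0:ℝ) ∪ Ioc 0 t := (Iic_union_Ioc_eq_Iic ht).symm
  rw [hsplit, setIntegral_union (Iic_disjoint_Ioc le_rfl) measurableSet_Ioc
    (poly_mul_integrable hf hfi n t).integrableOn
    (poly_mul_integrable hf hfi n t).integrableOn]
  have hzero : (∫ y in Ioc (0:ℝ) t, (t - y) ^ n * f y) = 0 := by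
    rw [setIntegral_congr_fun measurableSet_Ioc
      (fun y hy => ?_ : EqOn (fun y => (t - y) ^ n * f y) (fun _ => (0:ℝ)) (Ioc 0 t))]
    · simp
    · have : f y = 0 := by
        by_contra hne
        exact absurd (hsupp (Function.mem_support.mpr hne)) (by simp [mem_Iic]; linarith [hy.1])
      simp [this]
  rw [hzero, add_zero]
  have hbin : (∫ y in Iic (0:ℝ), (t - y) ^ n * f y) =
      ∫ y in Iic (0:ℝ), ∑ i ∈ Finset.range (n + 1),
        (t ^ i * (n.choose i : ℝ)) * ((-y) ^ (n - i) * f y) := by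
    congr 1; funext y
    rw [sub_eq_add_neg, add_pow, Finset.sum_mul]
    congr 1; funext i
    ring
  rw [hbin, integral_finset_sum]
  · apply Finset.sum_eq_zero
    intro i hi
    rw [integral_const_mul, hmom (n - i) (Nat.sub_le n i), mul_zero]
  · intro i hi
    exact ((hmono (n - i) (Nat.sub_le n i)).const_mul _).integrableOn

lemma key_weighted (w : ℝ → ℝ) (hw_pos : ∀ x, 0 < w x) (hw_cont : Continuous w)
    (hw_fast : ∀ j : ℕ, ∃ C : ℝ, ∀ x : ℝ, (1 + |x|) ^ j ≤ C * w x)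
    (p : ℝ) (hp1 : 1 ≤ p) (n : ℕ) :
    ∃ D > 0, ∀ f : ℝ → ℝ, Measurable f → Integrable (fun x => |f x| ^ p * w x) →
      Integrable (fun y => (1 + |y|) ^ n * |f y|) ∧
      (∫ y, (1 + |y|) ^ n * |f y|) ≤ D * (∫ x, |f x| ^ p * w x) ^ (1 / p) := by
  have hp0 : (0:ℝ) < p := lt_of_lt_of_le one_pos hp1
  have claim : ∃ D > 0, ∀ f : ℝ → ℝ, Measurable f →
      Integrable (fun x => |f x| ^ p * w x) → (∫ x, |f x| ^ p * w x) ≤ 1 →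
      Integrable (fun y => (1 + |y|) ^ n * |f y|) ∧
      (∫ y, (1 + |y|) ^ n * |f y|) ≤ D := by
    rcases eq_or_lt_of_le hp1 with hp | hp
    · -- p = 1
      obtain ⟨C, hC⟩ := hw_fast n
      have hC0 : 0 < C := by
        have h0 := hC 0
        simp only [abs_zero, add_zero, one_pow] at h0
        nlinarith [hw_pos 0]
      refine ⟨C, hC0, fun f hf hfi hI1 => ?_⟩
      have hpoint : ∀ y, (1 + |y|) ^ n * |f y| ≤ C * (|f y| ^ p * w y) := by
        intro y
        rw [← hp, Real.rpow_one]
        calc (1 + |y|) ^ n * |f y| ≤ C * w y * |f y| :=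
              mul_le_mul_of_nonneg_right (hC y) (abs_nonneg _)
        _ = C * (|f y| * w y) := by ring
      have hmeas : Measurable fun y => (1 + |y|) ^ n * |f y| :=
        (((continuous_const.add continuous_abs).pow n).measurable).mul hf.abs
      have hint : Integrable (fun y => (1 + |y|) ^ n * |f y|) := by
        apply Integrable.mono' (hfi.const_mul C) hmeas.aestronglyMeasurable
        refine Filter.Eventually.of_forall fun y => ?_
        rw [Real.norm_eq_abs, abs_of_nonneg (by positivity)]
        exact hpoint y
      refine ⟨hint, ?_⟩
      calc (∫ y, (1 + |y|) ^ n * |f y|) ≤ ∫ y, C * (|f y| ^ p * w y) :=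
            integral_mono hint (hfi.const_mul C) hpoint
      _ = C * ∫ y, |f y| ^ p * w y := integral_const_mul _ _
      _ ≤ C * 1 := mul_le_mul_of_nonneg_left hI1 hC0.le
      _ = C := mul_one C
    · -- 1 < p
      set q := p.conjExponent with hqdef
      have hpq : p.HolderConjugate q := Real.HolderConjugate.conjExponent hp
      have hq1 : 1 < q := hpq.symm.lt
      have hq0 : (0:ℝ) < q := lt_trans one_pos hq1
      have hqp : q / p = q - 1 := hpq.symm.div_conj_eq_sub_one
      obtain ⟨j, hj⟩ : ∃ j : ℕ, (n : ℝ) * q + 2 ≤ (j : ℝ) * (q - 1) := by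
        obtain ⟨j, hj⟩ := exists_nat_ge (((n : ℝ) * q + 2) / (q - 1))
        refine ⟨j, ?_⟩
        have hq10 : (0:ℝ) < q - 1 := by linarith
        calc (n : ℝ) * q + 2 = ((n : ℝ) * q + 2) / (q - 1) * (q - 1) := by field_simp
        _ ≤ (j : ℝ) * (q - 1) := mul_le_mul_of_nonneg_right hj hq10.le
      obtain ⟨Cj, hCj⟩ := hw_fast j
      have hCj0 : 0 < Cj := by
        have h0 := hCj 0
        simp only [abs_zero, add_zero, one_pow] at h0
        nlinarith [hw_pos 0]
      set b := fun y : ℝ => (1 + |y|) ^ n * (w y) ^ (-(1 / p)) with hbdef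
      have hb_nonneg : ∀ y, 0 ≤ b y := fun y =>
        mul_nonneg (by positivity) (Real.rpow_nonneg (hw_pos y).le _)
      have hb_cont : Continuous b :=
        ((continuous_const.add continuous_abs).pow n).mul
          (hw_cont.rpow_const fun y => Or.inl (hw_pos y).ne')
      have h1y : ∀ y : ℝ, (1:ℝ) ≤ 1 + |y| := fun y => by linarith [abs_nonneg y]
      have hbq : ∀ y, b y ^ q ≤ Cj ^ (q - 1) * (1 + y ^ 2)⁻¹ := by
        intro y
        have h1y' : (0:ℝ) < 1 + |y| := lt_of_lt_of_le one_pos (h1y y)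
        have hbq1 : b y ^ q = (1 + |y|) ^ ((n : ℝ) * q) * (w y) ^ (-(q - 1)) := by
          rw [hbdef]
          rw [Real.mul_rpow (by positivity) (Real.rpow_nonneg (hw_pos y).le _),
            ← Real.rpow_natCast (1 + |y|) n, ← Real.rpow_mul h1y'.le,
            ← Real.rpow_mul (hw_pos y).le]
          congr 2
          rw [← hqp]
          field_simp
        have hwlb : Cj⁻¹ * (1 + |y|) ^ (j : ℝ) ≤ w y := by
          rw [Real.rpow_natCast, inv_mul_le_iff₀ hCj0]
          exact hCj y
        have hwlb0 : (0:ℝ) < Cj⁻¹ * (1 + |y|) ^ (j : ℝ) :=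
          mul_pos (inv_pos.mpr hCj0) (Real.rpow_pos_of_pos h1y' _)
        have hstep : (w y) ^ (-(q - 1)) ≤ (Cj⁻¹ * (1 + |y|) ^ (j : ℝ)) ^ (-(q - 1)) :=
          Real.rpow_le_rpow_of_nonpos hwlb0 hwlb (by linarith)
        have hsplit : (Cj⁻¹ * (1 + |y|) ^ (j : ℝ)) ^ (-(q - 1)) =
            Cj ^ (q - 1) * (1 + |y|) ^ (-((j : ℝ) * (q - 1))) := by
          rw [Real.mul_rpow (inv_nonneg.mpr hCj0.le) (Real.rpow_nonneg h1y'.le _),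
            Real.inv_rpow hCj0.le, Real.rpow_neg hCj0.le, inv_inv,
            ← Real.rpow_mul h1y'.le]
          congr 1
          ring
        calc b y ^ q = (1 + |y|) ^ ((n : ℝ) * q) * (w y) ^ (-(q - 1)) := hbq1
        _ ≤ (1 + |y|) ^ ((n : ℝ) * q) * (Cj ^ (q - 1) * (1 + |y|) ^ (-((j : ℝ) * (q - 1)))) := by
              rw [← hsplit]
              exact mul_le_mul_of_nonneg_left hstep (Real.rpow_nonneg h1y'.le _)
        _ = Cj ^ (q - 1) * (1 + |y|) ^ ((n : ℝ) * q - (j : ℝ) * (q - 1)) := by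
              rw [show (n : ℝ) * q - (j : ℝ) * (q - 1) =
                (n : ℝ) * q + -((j : ℝ) * (q - 1)) by ring, Real.rpow_add h1y']
              ring
        _ ≤ Cj ^ (q - 1) * (1 + |y|) ^ (-(2:ℝ)) := by
              refine mul_le_mul_of_nonneg_left ?_ (Real.rpow_nonneg hCj0.le _)
              exact Real.rpow_le_rpow_of_exponent_le (h1y y) (by linarith)
        _ ≤ Cj ^ (q - 1) * (1 + y ^ 2)⁻¹ := by
              refine mul_le_mul_of_nonneg_left ?_ (Real.rpow_nonneg hCj0.le _)
              rw [Real.rpow_neg h1y'.le, Real.rpow_two]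
              refine inv_anti₀ (by positivity) ?_
              nlinarith [abs_nonneg y, sq_abs y]
      have hbq_meas : Continuous fun y => b y ^ q :=
        hb_cont.rpow_const fun y => Or.inr hq0.le
      have hbq_int : Integrable fun y => b y ^ q := by
        apply Integrable.mono' (integrable_inv_one_add_sq.const_mul (Cj ^ (q - 1)))
          hbq_meas.aestronglyMeasurable
        refine Filter.Eventually.of_forall fun y => ?_
        rw [Real.norm_eq_abs, abs_of_nonneg (Real.rpow_nonneg (hb_nonneg y) _)]
        exact hbq y
      set B := ∫ y, b y ^ q with hBdef
      have hB0 : 0 ≤ B := integral_nonneg fun y => Real.rpow_nonneg (hb_nonneg y) _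
      refine ⟨1 / p + B / q, by positivity, fun f hf hfi hI1 => ?_⟩
      set a := fun y => |f y| * (w y) ^ (1 / p) with hadef
      have ha_nonneg : ∀ y, 0 ≤ a y := fun y =>
        mul_nonneg (abs_nonneg _) (Real.rpow_nonneg (hw_pos y).le _)
      have hab : ∀ y, (1 + |y|) ^ n * |f y| = a y * b y := by
        intro y
        have hw1 : (w y) ^ (1 / p) * (w y) ^ (-(1 / p)) = 1 := by
          rw [← Real.rpow_add (hw_pos y), add_neg_cancel, Real.rpow_zero]
        calc (1 + |y|) ^ n * |f y|
            = (|f y| * ((1 + |y|) ^ n)) * ((w y) ^ (1 / p) * (w y) ^ (-(1 / p))) := by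
              rw [hw1]; ring
        _ = a y * b y := by rw [hadef, hbdef]; ring
      have hap : ∀ y, a y ^ p = |f y| ^ p * w y := by
        intro y
        rw [hadef, Real.mul_rpow (abs_nonneg _) (Real.rpow_nonneg (hw_pos y).le _),
          ← Real.rpow_mul (hw_pos y).le, one_div, inv_mul_cancel₀ hp0.ne', Real.rpow_one]
      set R := fun y => (|f y| ^ p * w y) / p + b y ^ q / q with hRdef
      have hRint : Integrable R := (hfi.div_const p).add (hbq_int.div_const q)
      have hpoint : ∀ y, (1 + |y|) ^ n * |f y| ≤ R y := by
        intro y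
        show (1 + |y|) ^ n * |f y| ≤ |f y| ^ p * w y / p + b y ^ q / q
        rw [hab y, ← hap y]
        exact Real.young_inequality_of_nonneg (ha_nonneg y) (hb_nonneg y) hpq
      have hmeas : Measurable fun y => (1 + |y|) ^ n * |f y| :=
        (((continuous_const.add continuous_abs).pow n).measurable).mul hf.abs
      have hint : Integrable fun y => (1 + |y|) ^ n * |f y| := by
        apply Integrable.mono' hRint hmeas.aestronglyMeasurable
        refine Filter.Eventually.of_forall fun y => ?_
        rw [Real.norm_eq_abs, abs_of_nonneg (by positivity)]
        exact hpoint y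
      refine ⟨hint, ?_⟩
      calc (∫ y, (1 + |y|) ^ n * |f y|) ≤ ∫ y, R y := integral_mono hint hRint hpoint
      _ = (∫ y, |f y| ^ p * w y) / p + B / q := by
            rw [hRdef, integral_add (hfi.div_const p) (hbq_int.div_const q),
              integral_div, integral_div]
      _ ≤ 1 / p + B / q := by gcongr
  -- Scaling step
  obtain ⟨D, hD0, hDclaim⟩ := claim
  refine ⟨D, hD0, fun f hf hfi => ?_⟩
  set I := ∫ x, |f x| ^ p * w x with hIdef
  have hI0 : 0 ≤ I := integral_nonneg fun x =>
    mul_nonneg (Real.rpow_nonneg (abs_nonneg _) _) (hw_pos x).le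
  rcases eq_or_lt_of_le hI0 with hI0' | hIpos
  · -- I = 0 : f vanishes a.e.
    have hae : (fun x => |f x| ^ p * w x) =ᵐ[volume] 0 := by
      rw [← integral_eq_zero_iff_of_nonneg
        (fun x => mul_nonneg (Real.rpow_nonneg (abs_nonneg _) _) (hw_pos x).le) hfi]
      exact hI0'.symm
    have h1 : (fun y => (1 + |y|) ^ n * |f y|) =ᵐ[volume] 0 := by
      filter_upwards [hae] with x hx
      have hx' : |f x| ^ p * w x = 0 := hx
      have hfx : |f x| = 0 := by
        rcases mul_eq_zero.mp hx' with h | h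
        · have := Real.rpow_eq_zero_iff_of_nonneg (abs_nonneg (f x)) |>.mp h
          exact this.1
        · exact absurd h (hw_pos x).ne'
      simp [hfx]
    constructor
    · exact (integrable_zero _ _ _).congr h1.symm
    · rw [integral_congr_ae h1]
      simp only [Pi.zero_apply, integral_zero]
      exact mul_nonneg hD0.le (Real.rpow_nonneg hI0 _)
  · -- 0 < I
    set c := I ^ (-(1 / p)) with hcdef
    have hc0 : 0 < c := Real.rpow_pos_of_pos hIpos _
    set g := fun y => c * f y with hgdef
    have hg : Measurable g := hf.const_mul c
    have hgabs : ∀ y, |g y| = c * |f y| := fun y => by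
      rw [hgdef]; simp [abs_mul, abs_of_pos hc0]
    have hcp : c ^ p = I⁻¹ := by
      rw [hcdef, ← Real.rpow_mul hI0]
      have : -(1 / p) * p = -1 := by field_simp
      rw [this, Real.rpow_neg_one]
    have hgw : ∀ x, |g x| ^ p * w x = I⁻¹ * (|f x| ^ p * w x) := by
      intro x
      rw [hgabs x, Real.mul_rpow hc0.le (abs_nonneg _), hcp]
      ring
    have hgint : Integrable fun x => |g x| ^ p * w x := by
      have : (fun x => |g x| ^ p * w x) = fun x => I⁻¹ * (|f x| ^ p * w x) := funext hgw
      rw [this]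
      exact hfi.const_mul _
    have hgle : (∫ x, |g x| ^ p * w x) ≤ 1 := by
      have : (∫ x, |g x| ^ p * w x) = I⁻¹ * I := by
        simp only [hgw]
        rw [integral_const_mul]
      rw [this, inv_mul_cancel₀ hIpos.ne']
    obtain ⟨hint_g, hbound_g⟩ := hDclaim g hg hgint hgle
    have hrel : ∀ y, (1 + |y|) ^ n * |f y| = c⁻¹ * ((1 + |y|) ^ n * |g y|) := by
      intro y
      rw [hgabs y]
      field_simp
    have hcinv : c⁻¹ = I ^ (1 / p) := by
      rw [hcdef, Real.rpow_neg hI0, inv_inv]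
    constructor
    · have := hint_g.const_mul c⁻¹
      have heq : (fun y => c⁻¹ * ((1 + |y|) ^ n * |g y|)) =
          fun y => (1 + |y|) ^ n * |f y| := funext fun y => (hrel y).symm
      rwa [heq] at this
    · have h2 : (∫ y, (1 + |y|) ^ n * |f y|) = c⁻¹ * ∫ y, (1 + |y|) ^ n * |g y| := by
        rw [← integral_const_mul]
        exact integral_congr_ae (Filter.Eventually.of_forall hrel)
      rw [h2, hcinv]
      calc I ^ (1 / p) * ∫ y, (1 + |y|) ^ n * |g y| ≤ I ^ (1 / p) * D :=
            mul_le_mul_of_nonneg_left hbound_g (Real.rpow_nonneg hI0 _)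
      _ = D * I ^ (1 / p) := mul_comm _ _

/-- Lemma 2.1(ii), second part: under the same hypotheses, for each `1 ≤ k ≤ m`,
`I^k f ∈ L¹(ℝ)` and `‖I^k f‖₁ ≤ C ‖f‖_{p,w}` with `C = C(k,p,w)` independent of `f`. -/
theorem iterInt_L1_bound (w : ℝ → ℝ) (hw_pos : ∀ x, 0 < w x)
    (hw_cont : Continuous w)
    (hw_fast : ∀ j : ℕ, ∃ C : ℝ, ∀ x : ℝ, (1 + |x|) ^ j ≤ C * w x)
    (p : ℝ) (hp1 : 1 ≤ p) (m k : ℕ) (hk1 : 1 ≤ k) (hkm : k ≤ m) :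
    ∃ C > 0, ∀ f : ℝ → ℝ, Measurable f →
      Integrable (fun x => |f x| ^ p * w x) →
      Function.support f ⊆ Iic (0 : ℝ) →
      (∀ j : ℕ, 1 ≤ j → j ≤ m →
        (1 / (Nat.factorial (j - 1) : ℝ)) * ∫ y in Iic (0 : ℝ), (-y) ^ (j - 1) * f y = 0) →
      Integrable (iterInt f k) ∧
        ∫ x : ℝ, |iterInt f k x| ≤ C * (∫ x : ℝ, |f x| ^ p * w x) ^ (1 / p) := by
  obtain ⟨n, rfl⟩ : ∃ n, k = n + 1 := ⟨k - 1, (Nat.succ_pred_eq_of_pos hk1).symm⟩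
  choose D hD0 hDspec using fun j => key_weighted w hw_pos hw_cont hw_fast p hp1 j
  have hnf0 : (0:ℝ) < (n.factorial : ℝ) := by
    exact_mod_cast n.factorial_pos
  refine ⟨D (n + 1) / n.factorial, div_pos (hD0 _) hnf0, fun f hf hfi hsupp hmom => ?_⟩
  have hfi' : ∀ j : ℕ, Integrable fun y => (1 + |y|) ^ j * |f y| :=
    fun j => (hDspec j f hf hfi).1
  have hfi'' : ∀ j : ℕ, Integrable fun y => (1 + |y|) ^ j * |(|f y|)| := by
    intro j
    simpa [abs_abs] using hfi' j
  have hmom' : ∀ i : ℕ, i ≤ n → (∫ y in Iic (0:ℝ), (-y) ^ i * f y) = 0 := by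
    intro i hi
    have h := hmom (i + 1) (by omega) (by omega)
    simp only [Nat.add_sub_cancel] at h
    have hne : (1 / (Nat.factorial i : ℝ)) ≠ 0 := by positivity
    rcases mul_eq_zero.mp h with h' | h'
    · exact absurd h' hne
    · exact h'
  have hvan : ∀ t : ℝ, 0 ≤ t → (∫ y in Iic t, (t - y) ^ n * f y) = 0 :=
    moment_vanish hf hfi' hsupp n hmom'
  set ψ := fun t => ∫ y, Hker f n 0 (t, y) with hψ
  have hH0 : Integrable (Hker f n 0) (volume.prod volume) := Hker_integrable hf hfi' n 0
  have hψi : Integrable ψ := hH0.integral_prod_left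
  have heq : iterInt f (n + 1) = fun t => (1 / (n.factorial : ℝ)) * ψ t := by
    funext t
    rw [cauchy_formula hf hfi' n t, hψ]
    simp only
    rw [Hker_integral_y]
    by_cases h : t ≤ 0
    · rw [if_pos h]
    · rw [if_neg h, hvan t (le_of_not_ge h), mul_zero]
  constructor
  · rw [heq]
    exact hψi.const_mul _
  · have habs : ∀ x, |iterInt f (n + 1) x| = (1 / (n.factorial : ℝ)) * |ψ x| := by
      intro x
      rw [heq]
      rw [abs_mul, abs_of_nonneg (by positivity : (0:ℝ) ≤ 1 / (n.factorial : ℝ))]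
    have hnormint : Integrable fun t => ∫ y, ‖Hker f n 0 (t, y)‖ :=
      hH0.integral_norm_prod_left
    have step1 : (∫ x, |ψ x|) ≤ ∫ t, ∫ y, ‖Hker f n 0 (t, y)‖ := by
      apply integral_mono hψi.abs hnormint
      intro t
      calc |ψ t| = ‖∫ y, Hker f n 0 (t, y)‖ := (Real.norm_eq_abs _).symm
      _ ≤ ∫ y, ‖Hker f n 0 (t, y)‖ := norm_integral_le_integral_norm _
    have step2 : (∫ t, ∫ y, ‖Hker f n 0 (t, y)‖) =
        ∫ y in Iic (0:ℝ), ((0 - y) ^ (n + 1) / (n + 1)) * |f y| := by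
      have : (fun t => ∫ y, ‖Hker f n 0 (t, y)‖) =
          fun t => ∫ y, Hker (fun y => |f y|) n 0 (t, y) := by
        funext t; congr 1; funext y; exact Hker_norm f n 0 (t, y)
      rw [this]
      exact Hker_swap hf.abs hfi'' n 0
    have hpm : Integrable fun y => ((0 - y) ^ (n + 1) / (n + 1)) * |f y| := by
      have h0 := (poly_mul_integrable hf.abs hfi'' (n + 1) 0).div_const ((n:ℝ) + 1)
      apply h0.congr
      refine Filter.Eventually.of_forall fun y => ?_
      push_cast
      ring
    have step3 : (∫ y in Iic (0:ℝ), ((0 - y) ^ (n + 1) / (n + 1)) * |f y|) ≤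
        ∫ y in Iic (0:ℝ), (1 + |y|) ^ (n + 1) * |f y| := by
      apply setIntegral_mono_on hpm.integrableOn (hfi' (n + 1)).integrableOn
        measurableSet_Iic
      intro y hy
      have hy0 : y ≤ 0 := mem_Iic.mp hy
      have h1 : (0:ℝ) - y = |y| := by rw [abs_of_nonpos hy0]; ring
      refine mul_le_mul_of_nonneg_right ?_ (abs_nonneg _)
      calc (0 - y) ^ (n + 1) / ((n:ℝ) + 1) ≤ (0 - y) ^ (n + 1) := by
            apply div_le_self (by rw [h1]; positivity)
            exact_mod_cast Nat.one_le_iff_ne_zero.mpr (Nat.succ_ne_zero n)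
      _ ≤ (1 + |y|) ^ (n + 1) := by
            rw [h1]
            exact pow_le_pow_left₀ (abs_nonneg _) (by linarith [abs_nonneg y]) _
    have step4 : (∫ y in Iic (0:ℝ), (1 + |y|) ^ (n + 1) * |f y|) ≤
        ∫ y, (1 + |y|) ^ (n + 1) * |f y| := by
      apply setIntegral_le_integral (hfi' (n + 1))
      refine Filter.Eventually.of_forall fun y => ?_
      positivity
    calc (∫ x, |iterInt f (n + 1) x|) = (1 / (n.factorial : ℝ)) * ∫ x, |ψ x| := by
          simp only [habs]
          rw [integral_const_mul]
    _ ≤ (1 / (n.factorial : ℝ)) *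
          (D (n + 1) * (∫ x, |f x| ^ p * w x) ^ (1 / p)) := by
          refine mul_le_mul_of_nonneg_left ?_ (by positivity)
          calc (∫ x, |ψ x|) ≤ ∫ t, ∫ y, ‖Hker f n 0 (t, y)‖ := step1
          _ = ∫ y in Iic (0:ℝ), ((0 - y) ^ (n + 1) / (n + 1)) * |f y| := step2
          _ ≤ ∫ y in Iic (0:ℝ), (1 + |y|) ^ (n + 1) * |f y| := step3
          _ ≤ ∫ y, (1 + |y|) ^ (n + 1) * |f y| := step4
          _ ≤ D (n + 1) * (∫ x, |f x| ^ p * w x) ^ (1 / p) := (hDspec (n + 1) f hf hfi).2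
    _ = D (n + 1) / n.factorial * (∫ x, |f x| ^ p * w x) ^ (1 / p) := by ring
end

section
/- Let w be a fast-growing weight on ℝ, 1 ≤ p < ∞, m ∈ ℕ, and let f ∈ L^p_w(ℝ) have support in (-∞,0] and satisfy J^k f = 0 for all 1 ≤ k ≤ m. Then the heat semigroup solution satisfies ‖e^{t∂ₓ²} f‖_∞ ≤ C t^{-(1+m)/2} ‖f‖_{p,w} for all t ≥ 1, where C depends only on p, w, m. -/
open MeasureTheory Set Real

private lemma gauss_smooth : ContDiff ℝ ⊤ (fun u : ℝ => Real.exp (-u ^ 2)) :=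
  ((contDiff_id.pow 2).neg).exp

private lemma gauss_poly (n : ℕ) : ∃ P : Polynomial ℝ,
    iteratedDeriv n (fun u : ℝ => Real.exp (-u ^ 2)) = fun u => P.eval u * Real.exp (-u ^ 2) := by
  induction n with
  | zero => exact ⟨1, by simp [iteratedDeriv_zero]⟩
  | succ n ih =>
    obtain ⟨P, hP⟩ := ih
    refine ⟨P.derivative - Polynomial.C 2 * Polynomial.X * P, ?_⟩
    rw [iteratedDeriv_succ, hP]
    funext u
    have h1 : HasDerivAt (fun u : ℝ => -u ^ 2) (-(2 * u)) u := by
      simpa using ((hasDerivAt_pow 2 u).fun_neg)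
    have h2 : HasDerivAt (fun u : ℝ => Real.exp (-u ^ 2)) (Real.exp (-u ^ 2) * (-(2 * u))) u :=
      h1.exp
    have h3 := (P.hasDerivAt u).fun_mul h2
    rw [h3.deriv]
    simp [Polynomial.eval_mul]
    ring

private lemma poly_gauss_bound (P : Polynomial ℝ) : ∃ B > 0, ∀ u : ℝ,
    |P.eval u * Real.exp (-u ^ 2)| ≤ B := by
  classical
  set d := P.natDegree with hd
  set S : ℝ := ∑ i ∈ Finset.range (d + 1), |P.coeff i| with hS
  have hS0 : 0 ≤ S := Finset.sum_nonneg fun i _ => abs_nonneg _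
  refine ⟨(S + 1) * Real.exp ((d : ℝ) ^ 2 / 4), by positivity, fun u => ?_⟩
  have hb : (1 : ℝ) ≤ 1 + |u| := by simp [abs_nonneg]
  have heval : |P.eval u| ≤ S * (1 + |u|) ^ d := by
    rw [Polynomial.eval_eq_sum_range]
    refine (Finset.abs_sum_le_sum_abs _ _).trans ?_
    rw [hS, Finset.sum_mul]
    refine Finset.sum_le_sum fun i hi => ?_
    rw [abs_mul, abs_pow]
    refine mul_le_mul_of_nonneg_left ?_ (abs_nonneg _)
    calc |u| ^ i ≤ (1 + |u|) ^ i := by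
          exact pow_le_pow_left₀ (abs_nonneg u) (by linarith) i
      _ ≤ (1 + |u|) ^ d := pow_le_pow_right₀ hb (Nat.lt_succ_iff.mp (Finset.mem_range.mp hi))
  have hexp : (1 + |u|) ^ d ≤ Real.exp ((d : ℝ) * |u|) := by
    calc (1 + |u|) ^ d ≤ Real.exp |u| ^ d :=
          pow_le_pow_left₀ (by positivity) (by simpa [add_comm] using Real.add_one_le_exp |u|) d
      _ = Real.exp ((d : ℝ) * |u|) := by rw [← Real.exp_nat_mul]
  have key : (d : ℝ) * |u| + -u ^ 2 ≤ (d : ℝ) ^ 2 / 4 := by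
    nlinarith [sq_nonneg (|u| - (d : ℝ) / 2), sq_abs u]
  calc |P.eval u * Real.exp (-u ^ 2)| = |P.eval u| * Real.exp (-u ^ 2) := by
        rw [abs_mul, abs_of_pos (Real.exp_pos _)]
    _ ≤ (S * (1 + |u|) ^ d) * Real.exp (-u ^ 2) := by
        exact mul_le_mul_of_nonneg_right heval (Real.exp_pos _).le
    _ ≤ S * Real.exp ((d : ℝ) * |u|) * Real.exp (-u ^ 2) := by
        have := mul_le_mul_of_nonneg_left hexp hS0
        exact mul_le_mul_of_nonneg_right (by linarith) (Real.exp_pos _).le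
    _ = S * Real.exp ((d : ℝ) * |u| + -u ^ 2) := by rw [mul_assoc, ← Real.exp_add]
    _ ≤ S * Real.exp ((d : ℝ) ^ 2 / 4) := by
        exact mul_le_mul_of_nonneg_left (Real.exp_le_exp.mpr key) hS0
    _ ≤ (S + 1) * Real.exp ((d : ℝ) ^ 2 / 4) := by
        have := (Real.exp_pos ((d : ℝ) ^ 2 / 4)).le
        nlinarith

private lemma iDW_eq {g : ℝ → ℝ} (hg : ContDiff ℝ ⊤ g) {s : Set ℝ} (hs : UniqueDiffOn ℝ s)
    {x : ℝ} (hx : x ∈ s) (n : ℕ) : iteratedDerivWithin n g s x = iteratedDeriv n g x := by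
  have h : HasFTaylorSeriesUpTo (⊤ : ℕ∞) g (ftaylorSeries ℝ g) :=
    contDiff_iff_ftaylorSeries.mp (hg.of_le le_top)
  have h1 : HasFTaylorSeriesUpToOn (⊤ : ℕ∞) g (ftaylorSeries ℝ g) s :=
    (hasFTaylorSeriesUpToOn_univ_iff.mpr h).mono (subset_univ s)
  have e1 := h1.eq_iteratedFDerivWithin_of_uniqueDiffOn (m := n) (by exact_mod_cast le_top) hs hx
  have e2 := h.eq_iteratedFDeriv (m := n) (by exact_mod_cast le_top) x
  rw [iteratedDerivWithin_eq_iteratedFDerivWithin, iteratedDeriv_eq_iteratedFDeriv, ← e1, ← e2]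

private lemma taylor_bound {g : ℝ → ℝ} (hg : ContDiff ℝ ⊤ g) (m : ℕ) {M : ℝ}
    (hM : ∀ u, |iteratedDeriv m g u| ≤ M) {y : ℝ} (hy : y ≤ 0) :
    |g y - ∑ k ∈ Finset.range m, iteratedDeriv k g 0 * y ^ k / (Nat.factorial k : ℝ)| ≤
      M * |y| ^ m / (Nat.factorial m : ℝ) := by
  match m with
  | 0 => simpa using (hM y)
  | (n+1) =>
    rcases eq_or_lt_of_le hy with rfl | hy'
    · have : ∑ k ∈ Finset.range (n+1), iteratedDeriv k g 0 * (0:ℝ) ^ k / (Nat.factorial k : ℝ)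
          = g 0 := by
        rw [Finset.sum_range_succ']
        simp
      rw [this, sub_self, abs_zero]
      have hM0 : 0 ≤ M := le_trans (abs_nonneg _) (hM 0)
      positivity
    · -- y < 0
      set G : ℝ → ℝ := fun u => g (-u) with hG
      have hGc : ContDiff ℝ ⊤ G := hg.comp contDiff_neg
      have hx : (0:ℝ) < -y := by linarith
      have hs : UniqueDiffOn ℝ (Icc 0 (-y)) := uniqueDiffOn_Icc hx
      have hfcd : ContDiffOn ℝ n G (Icc 0 (-y)) := (hGc.of_le le_top).contDiffOn
      have hdiff : Differentiable ℝ (iteratedDeriv n G) :=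
        hGc.differentiable_iteratedDeriv n (by exact lt_top_iff_ne_top.mpr (by simp))
      have hf' : DifferentiableOn ℝ (iteratedDerivWithin n G (Icc 0 (-y))) (Ioo 0 (-y)) := by
        refine (hdiff.differentiableOn).congr fun z hz => ?_
        exact iDW_eq hGc hs (Ioo_subset_Icc_self hz) n
      obtain ⟨c, hc, hrem⟩ := taylor_mean_remainder_lagrange hx.ne (by rwa [uIcc_of_le hx.le])
          (by rwa [uIcc_of_le hx.le, uIoo_of_le hx.le])
      rw [uIcc_of_le hx.le] at hrem
      rw [uIoo_of_le hx.le] at hc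
      have hsum : taylorWithinEval G n (Icc 0 (-y)) 0 (-y) =
          ∑ k ∈ Finset.range (n+1), iteratedDeriv k g 0 * y ^ k / (Nat.factorial k : ℝ) := by
        rw [taylor_within_apply]
        refine Finset.sum_congr rfl fun k hk => ?_
        rw [iDW_eq hGc hs (left_mem_Icc.mpr (le_of_lt hx)) k]
        have : iteratedDeriv k G 0 = (-1:ℝ) ^ k * iteratedDeriv k g 0 := by
          simpa [hG, smul_eq_mul] using iteratedDeriv_comp_neg k g 0
        rw [this]
        have h2 : (-y) ^ k * (-1:ℝ) ^ k = y ^ k := by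
          rw [← mul_pow]; ring_nf
        rw [smul_eq_mul, sub_zero]
        linear_combination ((Nat.factorial k : ℝ))⁻¹ * iteratedDeriv k g 0 * h2
      have hGy : G (-y) = g y := by simp [hG]
      have hiD : iteratedDerivWithin (n+1) G (Icc 0 (-y)) c =
          (-1:ℝ)^(n+1) * iteratedDeriv (n+1) g (-c) := by
        rw [iDW_eq hGc hs (Ioo_subset_Icc_self hc) (n+1)]
        simpa [hG, smul_eq_mul] using iteratedDeriv_comp_neg (n+1) g c
      rw [hGy, hsum, hiD] at hrem
      rw [hrem]
      have habs : |(-1:ℝ)^(n+1) * iteratedDeriv (n+1) g (-c) * (-y - 0)^(n+1) /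
          ((n+1).factorial : ℝ)| =
          |iteratedDeriv (n+1) g (-c)| * |y|^(n+1) / ((n+1).factorial : ℝ) := by
        rw [abs_div, abs_mul, abs_mul, abs_pow, abs_pow, abs_neg, abs_one, one_pow, one_mul,
          sub_zero, abs_neg, Nat.abs_cast]
      rw [habs]
      gcongr
      exact hM _

private lemma iD_affine {φ : ℝ → ℝ} (hφ : ContDiff ℝ ⊤ φ) (a c : ℝ) (n : ℕ) (y : ℝ) :
    iteratedDeriv n (fun z : ℝ => φ (a * z + c)) y = a ^ n * iteratedDeriv n φ (a * y + c) := by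
  have hF : ContDiff ℝ (n : ℕ∞) (fun z : ℝ => φ (z + c)) :=
    (hφ.of_le le_top).comp (contDiff_id.add contDiff_const)
  have h1 := iteratedDeriv_comp_const_mul hF a
  have h2 := iteratedDeriv_comp_add_const (n := n) (f := φ) (s := c)
  calc iteratedDeriv n (fun z : ℝ => φ (a * z + c)) y
      = a ^ n * iteratedDeriv n (fun z : ℝ => φ (z + c)) (a * y) := congrFun h1 y
    _ = a ^ n * iteratedDeriv n φ (a * y + c) := by rw [h2]

private lemma moment_bound (w : ℝ → ℝ) (hw_pos : ∀ x, 0 < w x) (hw_cont : Continuous w)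
    (hw_fast : ∀ j : ℕ, ∃ C : ℝ, ∀ x : ℝ, (1 + |x|) ^ j ≤ C * w x)
    (p : ℝ) (hp1 : 1 ≤ p) (j : ℕ) :
    ∃ D > 0, ∀ f : ℝ → ℝ, Measurable f → Integrable (fun x => |f x| ^ p * w x) →
      (∫ x, |f x| ^ p * w x) ≤ 1 →
      Integrable (fun y => |y| ^ j * |f y|) ∧ (∫ y, |y| ^ j * |f y|) ≤
        D := by
  have hp0 : 0 < p := lt_of_lt_of_le one_pos hp1
  set n : ℕ := ⌈p * (j + 2)⌉₊ with hn_def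
  have hn : p * ((j:ℝ) + 2) ≤ n := Nat.le_ceil _
  obtain ⟨Cn, hCn⟩ := hw_fast n
  have hCn0 : 0 < Cn := by
    have h0 : (1:ℝ) ≤ Cn * w 0 := by simpa using hCn 0
    nlinarith [hw_pos 0]
  set K : ℝ := Cn ^ (1/p) with hK_def
  have hK0 : 0 < K := Real.rpow_pos_of_pos hCn0 _
  have hI0 : 0 ≤ ∫ y : ℝ, (1 + y^2)⁻¹ := integral_nonneg fun y => by positivity
  refine ⟨K * (1 + ∫ y : ℝ, (1 + y^2)⁻¹), by positivity, fun f hf hint hnorm => ?_⟩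
  -- pointwise bound |y|^j ≤ (1+y²)⁻¹ * K * (w y)^(1/p)
  have hpt1 : ∀ y : ℝ, |y| ^ j ≤ (1 + y^2)⁻¹ * (K * (w y) ^ (1/p)) := by
    intro y
    have hb1 : (1:ℝ) ≤ 1 + |y| := by simp [abs_nonneg]
    have hb0 : (0:ℝ) < 1 + |y| := by linarith
    have step1 : |y| ^ j * (1 + y^2) ≤ (1 + |y|) ^ (j + 2) := by
      rw [pow_add]
      refine mul_le_mul (pow_le_pow_left₀ (abs_nonneg y) (by linarith) j) ?_ (by positivity)
        (by positivity)
      nlinarith [abs_nonneg y, sq_abs y]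
    have key : (1 + |y|) ^ ((((j+2):ℕ):ℝ) * p) ≤ Cn * w y := by
      calc (1 + |y|) ^ ((((j+2):ℕ):ℝ) * p) ≤ (1 + |y|) ^ ((n:ℕ):ℝ) := by
            refine Real.rpow_le_rpow_of_exponent_le hb1 ?_
            push_cast
            linarith [hn]
        _ = (1 + |y|) ^ n := Real.rpow_natCast _ n
        _ ≤ Cn * w y := hCn y
    have step2 : (1 + |y|) ^ (j + 2) ≤ (Cn * w y) ^ (1/p) := by
      have e1 : ((1 + |y|) ^ ((((j+2):ℕ):ℝ) * p)) ^ (1/p) = (1 + |y|) ^ (j + 2) := by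
        rw [← Real.rpow_mul hb0.le]
        have : (((j+2):ℕ):ℝ) * p * (1/p) = (((j+2):ℕ):ℝ) := by field_simp
        rw [this, Real.rpow_natCast]
      rw [← e1]
      exact Real.rpow_le_rpow (by positivity) key (by positivity)
    have step3 : (Cn * w y) ^ (1/p) = K * (w y) ^ (1/p) :=
      Real.mul_rpow hCn0.le (hw_pos y).le
    have h2 : (0:ℝ) < 1 + y^2 := by positivity
    rw [← step3]
    rw [inv_mul_eq_div, le_div_iff₀ h2]
    exact step1.trans step2
  -- pointwise: a ≤ a^p + 1 for a ≥ 0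
  have haux : ∀ a : ℝ, 0 ≤ a → a ≤ a ^ p + 1 := by
    intro a ha
    rcases le_or_gt a 1 with h | h
    · have : (0:ℝ) ≤ a ^ p := Real.rpow_nonneg ha p
      linarith
    · have h1 : a ^ (1:ℝ) ≤ a ^ p := Real.rpow_le_rpow_of_exponent_le h.le hp1
      rw [Real.rpow_one] at h1
      have : (0:ℝ) ≤ a ^ p := Real.rpow_nonneg ha p
      linarith
  -- combine
  have hApow : ∀ y : ℝ, (|f y| * (w y) ^ (1/p)) ^ p = |f y| ^ p * w y := by
    intro y
    rw [Real.mul_rpow (abs_nonneg _) (Real.rpow_nonneg (hw_pos y).le _),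
      ← Real.rpow_mul (hw_pos y).le]
    rw [one_div, inv_mul_cancel₀ (ne_of_gt hp0), Real.rpow_one]
  have hpt2 : ∀ y : ℝ, |y| ^ j * |f y| ≤ K * (|f y| ^ p * w y) + K * (1 + y^2)⁻¹ := by
    intro y
    have h2 : (0:ℝ) < 1 + y^2 := by positivity
    have h2' : (1 + y^2)⁻¹ ≤ 1 := by
      rw [inv_le_one_iff₀]; right; nlinarith
    have hA : 0 ≤ |f y| * (w y) ^ (1/p) := mul_nonneg (abs_nonneg _) (Real.rpow_nonneg (hw_pos y).le _)
    calc |y| ^ j * |f y| ≤ ((1 + y^2)⁻¹ * (K * (w y) ^ (1/p))) * |f y| :=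
          mul_le_mul_of_nonneg_right (hpt1 y) (abs_nonneg _)
      _ = K * (1 + y^2)⁻¹ * (|f y| * (w y) ^ (1/p)) := by ring
      _ ≤ K * (1 + y^2)⁻¹ * ((|f y| * (w y) ^ (1/p)) ^ p + 1) := by
          refine mul_le_mul_of_nonneg_left (haux _ hA) (mul_nonneg hK0.le (by positivity))
      _ = K * (1 + y^2)⁻¹ * (|f y| ^ p * w y) + K * (1 + y^2)⁻¹ := by rw [hApow]; ring
      _ ≤ K * (|f y| ^ p * w y) + K * (1 + y^2)⁻¹ := by
          have hfw : 0 ≤ |f y| ^ p * w y := mul_nonneg (Real.rpow_nonneg (abs_nonneg _) _) (hw_pos y).le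
          have : K * (1 + y^2)⁻¹ * (|f y| ^ p * w y) ≤ K * 1 * (|f y| ^ p * w y) := by
            refine mul_le_mul_of_nonneg_right (mul_le_mul_of_nonneg_left h2' hK0.le) hfw
          linarith [this]
  have hmeas : Measurable (fun y : ℝ => |y| ^ j * |f y|) :=
    ((continuous_abs.pow j).measurable).mul hf.abs
  have hγ : Integrable (fun y : ℝ => K * (|f y| ^ p * w y) + K * (1 + y^2)⁻¹) :=
    (hint.const_mul K).add ((integrable_inv_one_add_sq).const_mul K)
  have hInt : Integrable (fun y : ℝ => |y| ^ j * |f y|) := by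
    refine hγ.mono' hmeas.aestronglyMeasurable (ae_of_all _ fun y => ?_)
    rw [Real.norm_eq_abs, abs_of_nonneg (by positivity)]
    exact hpt2 y
  refine ⟨hInt, ?_⟩
  calc (∫ y, |y| ^ j * |f y|) ≤ ∫ y, (K * (|f y| ^ p * w y) + K * (1 + y^2)⁻¹) :=
        integral_mono hInt hγ hpt2
    _ = K * (∫ y, |f y| ^ p * w y) + K * ∫ y : ℝ, (1 + y^2)⁻¹ := by
        rw [integral_add (hint.const_mul K) ((integrable_inv_one_add_sq).const_mul K),
          integral_const_mul, integral_const_mul]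
    _ ≤ K * 1 + K * ∫ y : ℝ, (1 + y^2)⁻¹ := by
        have := mul_le_mul_of_nonneg_left hnorm hK0.le
        linarith
    _ = K * (1 + ∫ y : ℝ, (1 + y^2)⁻¹) := by ring

private lemma key_lemma (w : ℝ → ℝ) (hw_pos : ∀ x, 0 < w x) (hw_cont : Continuous w)
    (hw_fast : ∀ j : ℕ, ∃ C : ℝ, ∀ x : ℝ, (1 + |x|) ^ j ≤ C * w x)
    (p : ℝ) (hp1 : 1 ≤ p) (m : ℕ) :
    ∃ C > 0, ∀ f : ℝ → ℝ, Measurable f →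
      Integrable (fun x => |f x| ^ p * w x) →
      Function.support f ⊆ Iic (0 : ℝ) →
      (∀ k : ℕ, 1 ≤ k → k ≤ m →
        (1 / (Nat.factorial (k - 1) : ℝ)) * ∫ y in Iic (0 : ℝ), (-y) ^ (k - 1) * f y = 0) →
      (∫ x, |f x| ^ p * w x) ≤ 1 →
      ∀ t : ℝ, 1 ≤ t → ∀ x : ℝ,
        |(2 * π * t) ^ (-(1 : ℝ) / 2) * ∫ y : ℝ, Real.exp (-(x - y) ^ 2 / (4 * t)) * f y| ≤
          C * t ^ (-(1 + (m : ℝ)) / 2) := by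
  obtain ⟨P, hP⟩ := gauss_poly m
  obtain ⟨B, hB0, hB⟩ := poly_gauss_bound P
  have hBd : ∀ u, |iteratedDeriv m (fun u : ℝ => Real.exp (-u ^ 2)) u| ≤ B := by
    intro u; rw [hP]; exact hB u
  have hMB := moment_bound w hw_pos hw_cont hw_fast p hp1
  obtain ⟨D, hD0, hD⟩ := hMB m
  have hfact : (0:ℝ) < (Nat.factorial m : ℝ) := by positivity
  refine ⟨B * D / (Nat.factorial m : ℝ), by positivity, ?_⟩
  intro f hf hint hsupp hmom hnorm t ht x
  have ht0 : (0:ℝ) < t := lt_of_lt_of_le one_pos ht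
  have hIntj : ∀ j : ℕ, Integrable (fun y : ℝ => |y| ^ j * |f y|) ∧
      (∫ y : ℝ, |y| ^ j * |f y|) ≤ (hMB j).choose := fun j =>
    (hMB j).choose_spec.2 f hf hint hnorm
  have hDm := (hD f hf hint hnorm)
  set s : ℝ := Real.sqrt t with hs_def
  have hs1 : (1:ℝ) ≤ s := by
    rw [hs_def]
    simpa [Real.sqrt_one] using Real.sqrt_le_sqrt ht
  have hs0 : (0:ℝ) < s := lt_of_lt_of_le one_pos hs1
  have hst : s ^ 2 = t := Real.sq_sqrt ht0.le
  set g : ℝ → ℝ := fun y => Real.exp (-(x - y) ^ 2 / (4 * t)) with hg_def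
  have hgφ : g = fun y : ℝ => (fun u : ℝ => Real.exp (-u ^ 2)) ((2*s)⁻¹ * y + -((2*s)⁻¹ * x)) := by
    funext y
    simp only [hg_def]
    congr 1
    have hs0' : s ≠ 0 := ne_of_gt hs0
    field_simp
    ring_nf
    linear_combination (-4) * (x - y)^2 * hst
  have hgc : ContDiff ℝ ⊤ g := by
    rw [hgφ]
    exact gauss_smooth.comp ((contDiff_const.mul contDiff_id).add contDiff_const)
  set M : ℝ := B * (s⁻¹) ^ m with hM_def
  have hM0 : 0 < M := by positivity
  have hgd : ∀ u, |iteratedDeriv m g u| ≤ M := by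
    intro u
    rw [hgφ, iD_affine gauss_smooth _ _ m u]
    rw [abs_mul, abs_pow]
    have ha : |(2*s)⁻¹| = (2*s)⁻¹ := abs_of_pos (by positivity)
    rw [ha]
    have h1 : ((2*s)⁻¹ : ℝ) ^ m ≤ (s⁻¹) ^ m := by
      refine pow_le_pow_left₀ (by positivity) ?_ m
      refine inv_anti₀ hs0 (by linarith)
    calc (2*s)⁻¹ ^ m * |iteratedDeriv m (fun u : ℝ => Real.exp (-u ^ 2)) _|
        ≤ (2*s)⁻¹ ^ m * B := mul_le_mul_of_nonneg_left (hBd _) (by positivity)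
      _ ≤ (s⁻¹) ^ m * B := mul_le_mul_of_nonneg_right h1 hB0.le
      _ = M := by rw [hM_def]; ring
  -- moments vanish
  have hmom0 : ∀ k : ℕ, k < m → (∫ y : ℝ, y ^ k * f y) = 0 := by
    intro k hk
    have hcompl : ∀ y : ℝ, y ∉ Iic (0:ℝ) → y ^ k * f y = 0 := by
      intro y hy
      have : f y = 0 := by
        by_contra h
        exact hy (hsupp (Function.mem_support.mpr h))
      rw [this, mul_zero]
    have h1 : (∫ y : ℝ, y ^ k * f y) = ∫ y in Iic (0:ℝ), y ^ k * f y :=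
      (setIntegral_eq_integral_of_forall_compl_eq_zero hcompl).symm
    have h2 := hmom (k+1) (by omega) (by omega)
    simp only [Nat.add_sub_cancel] at h2
    have h3 : (∫ y in Iic (0:ℝ), (-y) ^ k * f y) = 0 := by
      have hne : (1 / (Nat.factorial k : ℝ)) ≠ 0 := by positivity
      exact (mul_eq_zero.mp h2).resolve_left hne
    have h4 : (∫ y in Iic (0:ℝ), (-y) ^ k * f y) =
        (-1:ℝ) ^ k * ∫ y in Iic (0:ℝ), y ^ k * f y := by
      rw [← integral_const_mul]
      congr 1
      funext y
      rw [neg_pow]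
      ring
    rw [h1]
    have hne2 : ((-1:ℝ)) ^ k ≠ 0 := pow_ne_zero _ (by norm_num)
    rw [h4] at h3
    exact (mul_eq_zero.mp h3).resolve_left hne2
  -- integrability
  have habsf : Integrable (fun y : ℝ => |f y|) := by
    have := (hIntj 0).1
    simpa using this
  have hIf : Integrable f :=
    habsf.mono' hf.aestronglyMeasurable (ae_of_all _ fun y => by simp [Real.norm_eq_abs])
  have hg01 : ∀ y, 0 < g y ∧ g y ≤ 1 := by
    intro y
    refine ⟨Real.exp_pos _, ?_⟩
    rw [hg_def]
    have : -(x - y) ^ 2 / (4 * t) ≤ 0 := by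
      apply div_nonpos_of_nonpos_of_nonneg <;> nlinarith
    calc Real.exp (-(x - y) ^ 2 / (4 * t)) ≤ Real.exp 0 := Real.exp_le_exp.mpr this
      _ = 1 := Real.exp_zero
  have hIgf : Integrable (fun y : ℝ => g y * f y) := by
    refine habsf.mono' ?_ (ae_of_all _ fun y => ?_)
    · exact ((hgc.continuous.measurable).mul hf).aestronglyMeasurable
    · rw [Real.norm_eq_abs, abs_mul]
      have := hg01 y
      calc |g y| * |f y| ≤ 1 * |f y| := by
            refine mul_le_mul_of_nonneg_right ?_ (abs_nonneg _)
            rw [abs_of_pos this.1]; exact this.2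
        _ = |f y| := one_mul _
  have hIyk : ∀ k : ℕ, Integrable (fun y : ℝ => y ^ k * f y) := by
    intro k
    refine ((hIntj k).1).mono' ?_ (ae_of_all _ fun y => ?_)
    · exact ((measurable_id.pow_const k).mul hf).aestronglyMeasurable
    · rw [Real.norm_eq_abs, abs_mul, abs_pow]
  set Sg : ℝ → ℝ := fun y => ∑ k ∈ Finset.range m,
    iteratedDeriv k g 0 * y ^ k / (Nat.factorial k : ℝ) with hSg_def
  have hSgf_eq : (fun y : ℝ => Sg y * f y) = fun y : ℝ => ∑ k ∈ Finset.range m,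
      (iteratedDeriv k g 0 / (Nat.factorial k : ℝ)) * (y ^ k * f y) := by
    funext y
    rw [hSg_def, Finset.sum_mul]
    refine Finset.sum_congr rfl fun k _ => by ring
  have hISgf : Integrable (fun y : ℝ => Sg y * f y) := by
    rw [hSgf_eq]
    exact integrable_finset_sum _ fun k _ => (hIyk k).const_mul _
  have hSgf0 : (∫ y : ℝ, Sg y * f y) = 0 := by
    rw [hSgf_eq, integral_finset_sum _ fun k _ => (hIyk k).const_mul _]
    refine Finset.sum_eq_zero fun k hk => ?_
    rw [integral_const_mul, hmom0 k (Finset.mem_range.mp hk), mul_zero]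
  have hEq : (∫ y : ℝ, g y * f y) = ∫ y : ℝ, (g y - Sg y) * f y := by
    have : (fun y : ℝ => (g y - Sg y) * f y) =
        fun y : ℝ => g y * f y - Sg y * f y := by funext y; ring
    rw [this, integral_sub hIgf hISgf, hSgf0, sub_zero]
  -- pointwise bound on the integrand
  have hbnd : ∀ y : ℝ, ‖(g y - Sg y) * f y‖ ≤
      (M / (Nat.factorial m : ℝ)) * (|y| ^ m * |f y|) := by
    intro y
    rcases eq_or_ne (f y) 0 with h | h
    · rw [h, mul_zero, norm_zero, abs_zero, mul_zero, mul_zero]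
    · have hy : y ≤ 0 := hsupp (Function.mem_support.mpr h)
      have htb := taylor_bound hgc m hgd hy
      rw [Real.norm_eq_abs, abs_mul]
      calc |g y - Sg y| * |f y| ≤ (M * |y| ^ m / (Nat.factorial m : ℝ)) * |f y| :=
            mul_le_mul_of_nonneg_right htb (abs_nonneg _)
        _ = (M / (Nat.factorial m : ℝ)) * (|y| ^ m * |f y|) := by ring
  have hIle : |∫ y : ℝ, g y * f y| ≤ (M / (Nat.factorial m : ℝ)) * D := by
    rw [hEq, ← Real.norm_eq_abs]
    refine (norm_integral_le_of_norm_le (((hIntj m).1).const_mul _)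
      (ae_of_all _ hbnd)).trans ?_
    rw [integral_const_mul]
    exact mul_le_mul_of_nonneg_left hDm.2 (by positivity)
  -- powers of t
  have hsinv : (s⁻¹ : ℝ) ^ m = t ^ (-(m:ℝ)/2) := by
    have h1 : s = t ^ ((1:ℝ)/2) := by rw [hs_def, Real.sqrt_eq_rpow]
    rw [h1, ← Real.rpow_neg ht0.le, ← Real.rpow_natCast (t ^ (-((1:ℝ)/2))) m,
      ← Real.rpow_mul ht0.le]
    congr 1
    ring
  have h2pit : (2 * π * t) ^ (-(1:ℝ)/2) ≤ t ^ (-(1:ℝ)/2) := by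
    have hpi : (1:ℝ) ≤ 2 * π := by nlinarith [Real.pi_gt_three]
    have hbase : t ≤ 2 * π * t := by nlinarith
    have hne : (-(1:ℝ)/2) = -((1:ℝ)/2) := by norm_num
    rw [hne, Real.rpow_neg (by positivity), Real.rpow_neg ht0.le]
    refine inv_anti₀ (Real.rpow_pos_of_pos ht0 _) ?_
    exact Real.rpow_le_rpow ht0.le hbase (by norm_num)
  have hexps : t ^ (-(1:ℝ)/2) * t ^ (-(m:ℝ)/2) = t ^ (-(1 + (m:ℝ))/2) := by
    rw [← Real.rpow_add ht0]
    congr 1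
    ring
  -- final assembly
  have hpos2 : (0:ℝ) < (2 * π * t) ^ (-(1:ℝ)/2) :=
    Real.rpow_pos_of_pos (by positivity) _
  calc |(2 * π * t) ^ (-(1:ℝ)/2) * ∫ y : ℝ, Real.exp (-(x - y) ^ 2 / (4 * t)) * f y|
      = (2 * π * t) ^ (-(1:ℝ)/2) * |∫ y : ℝ, g y * f y| := by
        rw [abs_mul, abs_of_pos hpos2]
    _ ≤ (2 * π * t) ^ (-(1:ℝ)/2) * ((M / (Nat.factorial m : ℝ)) * D) :=
        mul_le_mul_of_nonneg_left hIle hpos2.le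
    _ ≤ t ^ (-(1:ℝ)/2) * ((M / (Nat.factorial m : ℝ)) * D) := by
        refine mul_le_mul_of_nonneg_right h2pit (by positivity)
    _ = B * D / (Nat.factorial m : ℝ) * (t ^ (-(1:ℝ)/2) * t ^ (-(m:ℝ)/2)) := by
        rw [hM_def, hsinv]; ring
    _ = B * D / (Nat.factorial m : ℝ) * t ^ (-(1 + (m:ℝ))/2) := by rw [hexps]

/-- Proposition 2.2: if `f ∈ L^p_w(ℝ)` (fast-growing weight `w`, `1 ≤ p < ∞`) is
supported in `(-∞,0]` and `J^k f = 0` for all `1 ≤ k ≤ m`, then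
`‖e^{t∂ₓ²} f‖_∞ ≤ C t^{-(1+m)/2} ‖f‖_{p,w}` for all `t ≥ 1`, with `C = C(p,w,m)`. -/
theorem heat_decay_of_vanishing_moments (w : ℝ → ℝ) (hw_pos : ∀ x, 0 < w x)
    (hw_cont : Continuous w)
    (hw_fast : ∀ j : ℕ, ∃ C : ℝ, ∀ x : ℝ, (1 + |x|) ^ j ≤ C * w x)
    (p : ℝ) (hp1 : 1 ≤ p) (m : ℕ) :
    ∃ C > 0, ∀ f : ℝ → ℝ, Measurable f →
      Integrable (fun x => |f x| ^ p * w x) →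
      Function.support f ⊆ Iic (0 : ℝ) →
      (∀ k : ℕ, 1 ≤ k → k ≤ m →
        (1 / (Nat.factorial (k - 1) : ℝ)) * ∫ y in Iic (0 : ℝ), (-y) ^ (k - 1) * f y = 0) →
      ∀ t : ℝ, 1 ≤ t → ∀ x : ℝ,
        |(2 * π * t) ^ (-(1 : ℝ) / 2) * ∫ y : ℝ, Real.exp (-(x - y) ^ 2 / (4 * t)) * f y| ≤
          C * t ^ (-(1 + (m : ℝ)) / 2) * (∫ x : ℝ, |f x| ^ p * w x) ^ (1 / p) := by
  have hp0 : (0:ℝ) < p := lt_of_lt_of_le one_pos hp1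
  obtain ⟨C, hC0, hkey⟩ := key_lemma w hw_pos hw_cont hw_fast p hp1 m
  refine ⟨C, hC0, ?_⟩
  intro f hf hint hsupp hmom t ht x
  have ht0 : (0:ℝ) < t := lt_of_lt_of_le one_pos ht
  set I : ℝ := ∫ x : ℝ, |f x| ^ p * w x with hI_def
  have hI0 : 0 ≤ I := integral_nonneg fun x =>
    mul_nonneg (Real.rpow_nonneg (abs_nonneg _) _) (hw_pos x).le
  rcases eq_or_lt_of_le hI0 with hIz | hIpos
  · -- degenerate case : `f = 0` a.e.
    have hnn : 0 ≤ᵐ[volume] fun x : ℝ => |f x| ^ p * w x :=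
      ae_of_all _ fun x => mul_nonneg (Real.rpow_nonneg (abs_nonneg _) _) (hw_pos x).le
    have hae : (fun x : ℝ => |f x| ^ p * w x) =ᵐ[volume] 0 :=
      (integral_eq_zero_iff_of_nonneg_ae hnn hint).mp hIz.symm
    have haef : f =ᵐ[volume] 0 := by
      filter_upwards [hae] with y hy
      have hw' : w y ≠ 0 := ne_of_gt (hw_pos y)
      have h1 : |f y| ^ p = 0 := by
        rcases mul_eq_zero.mp hy with h | h
        · exact h
        · exact absurd h hw'
      have h2 : |f y| = 0 := by
        by_contra h
        have : (0:ℝ) < |f y| := lt_of_le_of_ne (abs_nonneg _) (Ne.symm h)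
        exact absurd h1 (ne_of_gt (Real.rpow_pos_of_pos this p))
      simpa [abs_eq_zero] using h2
    have hint0 : (∫ y : ℝ, Real.exp (-(x - y) ^ 2 / (4 * t)) * f y) = 0 := by
      rw [show (0:ℝ) = ∫ y : ℝ, (0:ℝ) by simp]
      refine integral_congr_ae ?_
      filter_upwards [haef] with y hy
      simp [hy]
    rw [hint0, mul_zero, abs_zero, ← hIz,
      Real.zero_rpow (by positivity : (1:ℝ)/p ≠ 0), mul_zero]
  · -- main case : normalize
    set N : ℝ := I ^ ((1:ℝ)/p) with hN_def
    have hNpos : 0 < N := Real.rpow_pos_of_pos hIpos _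
    have hNinv : 0 < N⁻¹ := inv_pos.mpr hNpos
    set f' : ℝ → ℝ := fun y => N⁻¹ * f y with hf'_def
    have hf'm : Measurable f' := hf.const_mul _
    have hfun : (fun x : ℝ => |f' x| ^ p * w x) =
        fun x : ℝ => (N⁻¹ ^ p) * (|f x| ^ p * w x) := by
      funext z
      rw [hf'_def]
      simp only
      rw [abs_mul, abs_of_pos hNinv, Real.mul_rpow hNinv.le (abs_nonneg _)]
      ring
    have hint' : Integrable (fun x : ℝ => |f' x| ^ p * w x) := by
      rw [hfun]; exact hint.const_mul _
    have hsupp' : Function.support f' ⊆ Iic (0:ℝ) := by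
      intro y hy
      refine hsupp ?_
      rw [Function.mem_support] at hy ⊢
      intro h
      exact hy (by rw [hf'_def]; simp [h])
    have hmom' : ∀ k : ℕ, 1 ≤ k → k ≤ m →
        (1 / (Nat.factorial (k - 1) : ℝ)) * ∫ y in Iic (0:ℝ), (-y) ^ (k - 1) * f' y = 0 := by
      intro k hk1 hk2
      have h2 := hmom k hk1 hk2
      have hne : (1 / (Nat.factorial (k-1) : ℝ)) ≠ 0 := by positivity
      have h3 : (∫ y in Iic (0:ℝ), (-y) ^ (k-1) * f y) = 0 :=
        (mul_eq_zero.mp h2).resolve_left hne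
      have h4 : (∫ y in Iic (0:ℝ), (-y) ^ (k-1) * f' y) =
          N⁻¹ * ∫ y in Iic (0:ℝ), (-y) ^ (k-1) * f y := by
        rw [← integral_const_mul]
        congr 1
        funext y
        rw [hf'_def]
        ring
      rw [h4, h3, mul_zero, mul_zero]
    have hNp : N ^ p = I := by
      rw [hN_def, ← Real.rpow_mul hI0, one_div, inv_mul_cancel₀ (ne_of_gt hp0), Real.rpow_one]
    have hnorm' : (∫ x : ℝ, |f' x| ^ p * w x) ≤ 1 := by
      rw [hfun, integral_const_mul, ← hI_def, Real.inv_rpow hNpos.le, hNp,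
        inv_mul_cancel₀ (ne_of_gt hIpos)]
    have hres := hkey f' hf'm hint' hsupp' hmom' hnorm' t ht x
    have hint'' : (∫ y : ℝ, Real.exp (-(x - y) ^ 2 / (4 * t)) * f' y) =
        N⁻¹ * ∫ y : ℝ, Real.exp (-(x - y) ^ 2 / (4 * t)) * f y := by
      rw [← integral_const_mul]
      congr 1
      funext y
      rw [hf'_def]
      ring
    rw [hint''] at hres
    have hpos2 : (0:ℝ) < (2 * π * t) ^ (-(1:ℝ)/2) :=
      Real.rpow_pos_of_pos (by positivity) _
    rw [show (2 * π * t) ^ (-(1:ℝ)/2) * (N⁻¹ * ∫ y : ℝ, Real.exp (-(x - y) ^ 2 / (4 * t)) * f y)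
        = N⁻¹ * ((2 * π * t) ^ (-(1:ℝ)/2) * ∫ y : ℝ, Real.exp (-(x - y) ^ 2 / (4 * t)) * f y)
        by ring, abs_mul, abs_of_pos hNinv] at hres
    have := mul_le_mul_of_nonneg_left hres hNpos.le
    rw [← mul_assoc, mul_inv_cancel₀ (ne_of_gt hNpos), one_mul] at this
    calc |(2 * π * t) ^ (-(1:ℝ)/2) * ∫ y : ℝ, Real.exp (-(x - y) ^ 2 / (4 * t)) * f y|
        ≤ N * (C * t ^ (-(1 + (m:ℝ))/2)) := this
      _ = C * t ^ (-(1 + (m:ℝ))/2) * I ^ (1/p) := by rw [hN_def]; ring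
end

section
/- Let X be a Banach space with a Schauder basis (ẽ_n) that is shrinking with respect to each of a given sequence of functionals x*_m ∈ X* (m ∈ ℕ), and let ε > 0. Then there exist an increasing sequence (n_m) ⊂ ℕ and a Schauder basis (e_n) of X with x*_m(e_n) = 0 for all n ≥ n_m, such that the linear operator T : X → X with T ẽ_n = e_n satisfies ‖id_X − T‖ < ε. -/
open Filter Topology

/-- A Schauder basis of a Banach space: a sequence `e` together with continuous
coordinate functionals `coord` such that every `x` is the norm-limit of its
partial expansions and `coord` is biorthogonal to `e` (this gives uniqueness of
the expansion coefficients). -/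
structure RealSchauderBasis (X : Type*) [NormedAddCommGroup X] [NormedSpace ℝ X] where
  e : ℕ → X
  coord : ℕ → X →L[ℝ] ℝ
  expand : ∀ x : X,
    Tendsto (fun n => ∑ k ∈ Finset.range n, coord k x • e k) atTop (𝓝 x)
  biorth : ∀ k m, coord k (e m) = if k = m then 1 else 0

/-- The `n`-th basis projection `Q_n x = ∑_{k<n} coord_k(x) • e_k`. -/
noncomputable def RealSchauderBasis.proj {X : Type*} [NormedAddCommGroup X]
    [NormedSpace ℝ X] (B : RealSchauderBasis X) (n : ℕ) : X →L[ℝ] X :=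
  ∑ k ∈ Finset.range n, (B.coord k).smulRight (B.e k)

section Aux

variable {X : Type*} [NormedAddCommGroup X] [NormedSpace ℝ X]

lemma proj_apply (B : RealSchauderBasis X) (n : ℕ) (x : X) :
    B.proj n x = ∑ k ∈ Finset.range n, B.coord k x • B.e k := by
  simp [RealSchauderBasis.proj]

lemma coord_proj (B : RealSchauderBasis X) (k n : ℕ) (x : X) :
    B.coord k (B.proj n x) = if k < n then B.coord k x else 0 := by
  rw [proj_apply, map_sum]
  simp only [map_smul, B.biorth, smul_eq_mul, mul_ite, mul_one, mul_zero]
  rw [Finset.sum_ite_eq (Finset.range n) k (fun j => B.coord j x)]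
  simp [Finset.mem_range]

lemma proj_e (B : RealSchauderBasis X) (N n : ℕ) :
    B.proj N (B.e n) = if n < N then B.e n else 0 := by
  rw [proj_apply]
  simp only [B.biorth]
  simp only [ite_smul, one_smul, zero_smul]
  rw [Finset.sum_ite_eq' (Finset.range N) n (fun k => B.e k)]
  simp [Finset.mem_range]

lemma idsub_e (B : RealSchauderBasis X) (N n : ℕ) :
    (ContinuousLinearMap.id ℝ X - B.proj N) (B.e n) = if N ≤ n then B.e n else 0 := by
  rw [ContinuousLinearMap.sub_apply, ContinuousLinearMap.id_apply, proj_e]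
  by_cases h : n < N
  · simp [h, Nat.not_le.mpr h]
  · simp [h, Nat.le_of_not_lt h]

lemma proj_comp_idsub (B : RealSchauderBasis X) {a b : ℕ} (hab : a ≤ b) :
    (B.proj a).comp (ContinuousLinearMap.id ℝ X - B.proj b) = 0 := by
  ext x
  rw [ContinuousLinearMap.comp_apply, proj_apply]
  refine Finset.sum_eq_zero fun k hk => ?_
  have hkb : k < b := lt_of_lt_of_le (Finset.mem_range.mp hk) hab
  have : B.coord k ((ContinuousLinearMap.id ℝ X - B.proj b) x) = 0 := by
    rw [ContinuousLinearMap.sub_apply, ContinuousLinearMap.id_apply, map_sub,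
      coord_proj, if_pos hkb, sub_self]
  rw [this, zero_smul]

lemma idsub_comp (B : RealSchauderBasis X) {N n : ℕ} (h : N ≤ n) :
    (ContinuousLinearMap.id ℝ X - B.proj N).comp (ContinuousLinearMap.id ℝ X - B.proj n)
      = ContinuousLinearMap.id ℝ X - B.proj n := by
  rw [ContinuousLinearMap.sub_comp, ContinuousLinearMap.id_comp,
    proj_comp_idsub B h, sub_zero]

/-- "Shrinking with respect to `f`". -/
def Shr (B : RealSchauderBasis X) (f : X →L[ℝ] ℝ) : Prop :=
  Tendsto (fun n => ‖f.comp (ContinuousLinearMap.id ℝ X - B.proj n)‖) atTop (𝓝 0)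

lemma Shr.sub {B : RealSchauderBasis X} {f g : X →L[ℝ] ℝ} (hf : Shr B f) (hg : Shr B g) :
    Shr B (f - g) := by
  have hb : ∀ n, ‖(f - g).comp (ContinuousLinearMap.id ℝ X - B.proj n)‖
      ≤ ‖f.comp (ContinuousLinearMap.id ℝ X - B.proj n)‖
        + ‖g.comp (ContinuousLinearMap.id ℝ X - B.proj n)‖ := fun n => by
    rw [ContinuousLinearMap.sub_comp]; exact norm_sub_le _ _
  have := hf.add hg
  rw [add_zero] at this
  exact squeeze_zero (fun n => norm_nonneg _) hb this

lemma Shr.zero {B : RealSchauderBasis X} : Shr B (0 : X →L[ℝ] ℝ) := by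
  have : (fun n => ‖(0 : X →L[ℝ] ℝ).comp (ContinuousLinearMap.id ℝ X - B.proj n)‖)
      = fun _ => (0 : ℝ) := by
    funext n; rw [ContinuousLinearMap.zero_comp, norm_zero]
  rw [Shr, this]
  exact tendsto_const_nhds

lemma Shr.add {B : RealSchauderBasis X} {f g : X →L[ℝ] ℝ} (hf : Shr B f) (hg : Shr B g) :
    Shr B (f + g) := by
  have hb : ∀ n, ‖(f + g).comp (ContinuousLinearMap.id ℝ X - B.proj n)‖
      ≤ ‖f.comp (ContinuousLinearMap.id ℝ X - B.proj n)‖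
        + ‖g.comp (ContinuousLinearMap.id ℝ X - B.proj n)‖ := fun n => by
    rw [ContinuousLinearMap.add_comp]; exact norm_add_le _ _
  have := Filter.Tendsto.add hf hg
  rw [add_zero] at this
  exact squeeze_zero (fun n => norm_nonneg _) hb this

lemma Shr.smul {B : RealSchauderBasis X} {f : X →L[ℝ] ℝ} (c : ℝ) (hf : Shr B f) :
    Shr B (c • f) := by
  have := hf.const_mul ‖c‖
  rw [mul_zero] at this
  refine this.congr fun n => ?_
  rw [ContinuousLinearMap.smul_comp]
  exact (norm_smul c _).symm

lemma Shr.sum {B : RealSchauderBasis X} {ι : Type*} {s : Finset ι} {f : ι → X →L[ℝ] ℝ}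
    (h : ∀ i ∈ s, Shr B (f i)) : Shr B (∑ i ∈ s, f i) := by
  classical
  induction s using Finset.induction_on with
  | empty => simpa using Shr.zero
  | insert _ _ hx ih =>
    rw [Finset.sum_insert hx]
    exact (h _ (Finset.mem_insert_self _ _)).add
      (ih fun i hi => h i (Finset.mem_insert_of_mem hi))

lemma Shr.tail {B : RealSchauderBasis X} {f : X →L[ℝ] ℝ} (hf : Shr B f) (N : ℕ) :
    Shr B (f.comp (ContinuousLinearMap.id ℝ X - B.proj N)) := by
  refine hf.congr' ?_
  filter_upwards [eventually_ge_atTop N] with n hn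
  rw [ContinuousLinearMap.comp_assoc, idsub_comp B hn]

open Classical in
/-- Joint recursive construction of the correcting functionals `g_m` (first
component) and the thresholds `n_m` (second component). -/
noncomputable def gF (B : RealSchauderBasis X) (xstar : ℕ → X →L[ℝ] ℝ) (w : ℕ → X) (δ : ℝ) :
    ℕ → (X →L[ℝ] ℝ) × ℕ
  | m =>
    let hm : X →L[ℝ] ℝ := xstar m - ∑ k ∈ (Finset.range m).attach,
        xstar m (w k.1) • (gF B xstar w δ k.1).1
    let prev : ℕ := ∑ k ∈ (Finset.range m).attach, (gF B xstar w δ k.1).2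
    let N : ℕ := if hN : ∃ N, prev < N ∧
        ‖hm.comp (ContinuousLinearMap.id ℝ X - B.proj N)‖ * (1 + ‖w m‖) ≤ δ * (1/2)^m
      then hN.choose else prev + 1
    (hm.comp (ContinuousLinearMap.id ℝ X - B.proj N), N)
  decreasing_by all_goals exact Finset.mem_range.mp k.2

/-- The functional `h_m = x*_m ∘ T_{m-1}`. -/
noncomputable def hF (B : RealSchauderBasis X) (xstar : ℕ → X →L[ℝ] ℝ) (w : ℕ → X) (δ : ℝ)
    (m : ℕ) : X →L[ℝ] ℝ :=
  xstar m - ∑ k ∈ Finset.range m, xstar m (w k) • (gF B xstar w δ k).1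

noncomputable def prevF (B : RealSchauderBasis X) (xstar : ℕ → X →L[ℝ] ℝ) (w : ℕ → X) (δ : ℝ)
    (m : ℕ) : ℕ :=
  ∑ k ∈ Finset.range m, (gF B xstar w δ k).2

open Classical in
lemma gF_eq (B : RealSchauderBasis X) (xstar : ℕ → X →L[ℝ] ℝ) (w : ℕ → X) (δ : ℝ) (m : ℕ) :
    gF B xstar w δ m =
      ((hF B xstar w δ m).comp (ContinuousLinearMap.id ℝ X - B.proj
        (if hN : ∃ N, prevF B xstar w δ m < N ∧
            ‖(hF B xstar w δ m).comp (ContinuousLinearMap.id ℝ X - B.proj N)‖ * (1 + ‖w m‖)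
              ≤ δ * (1/2)^m
          then hN.choose else prevF B xstar w δ m + 1)),
       (if hN : ∃ N, prevF B xstar w δ m < N ∧
            ‖(hF B xstar w δ m).comp (ContinuousLinearMap.id ℝ X - B.proj N)‖ * (1 + ‖w m‖)
              ≤ δ * (1/2)^m
          then hN.choose else prevF B xstar w δ m + 1)) := by
  have h1 : (∑ k ∈ (Finset.range m).attach, xstar m (w k.1) • (gF B xstar w δ k.1).1)
      = ∑ k ∈ Finset.range m, xstar m (w k) • (gF B xstar w δ k).1 :=
    Finset.sum_attach (Finset.range m) (fun k => xstar m (w k) • (gF B xstar w δ k).1)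
  have h2 : (∑ k ∈ (Finset.range m).attach, (gF B xstar w δ k.1).2)
      = ∑ k ∈ Finset.range m, (gF B xstar w δ k).2 :=
    Finset.sum_attach (Finset.range m) (fun k => (gF B xstar w δ k).2)
  conv_lhs => rw [gF]
  rw [hF, prevF, ← h1, ← h2]

open Classical in
lemma nmF_def (B : RealSchauderBasis X) (xstar : ℕ → X →L[ℝ] ℝ) (w : ℕ → X) (δ : ℝ) (m : ℕ) :
    (gF B xstar w δ m).2 =
      (if hN : ∃ N, prevF B xstar w δ m < N ∧
            ‖(hF B xstar w δ m).comp (ContinuousLinearMap.id ℝ X - B.proj N)‖ * (1 + ‖w m‖)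
              ≤ δ * (1/2)^m
          then hN.choose else prevF B xstar w δ m + 1) := by
  conv_lhs => rw [gF_eq]

lemma gfun_eq (B : RealSchauderBasis X) (xstar : ℕ → X →L[ℝ] ℝ) (w : ℕ → X) (δ : ℝ) (m : ℕ) :
    (gF B xstar w δ m).1 = (hF B xstar w δ m).comp
      (ContinuousLinearMap.id ℝ X - B.proj ((gF B xstar w δ m).2)) := by
  conv_rhs => rw [gF_eq]
  conv_lhs => rw [gF_eq]

lemma shr_hF (B : RealSchauderBasis X) (xstar : ℕ → X →L[ℝ] ℝ) (w : ℕ → X) (δ : ℝ)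
    (hx : ∀ m, Shr B (xstar m)) : ∀ m, Shr B (hF B xstar w δ m) := by
  intro m
  induction m using Nat.strong_induction_on with
  | _ m IH =>
    rw [hF]
    refine (hx m).sub (Shr.sum fun k hk => ?_)
    refine Shr.smul _ ?_
    rw [gfun_eq]
    exact (IH k (Finset.mem_range.mp hk)).tail _

lemma nm_spec (B : RealSchauderBasis X) (xstar : ℕ → X →L[ℝ] ℝ) (w : ℕ → X) {δ : ℝ}
    (hδ : 0 < δ) (hx : ∀ m, Shr B (xstar m)) (m : ℕ) :
    prevF B xstar w δ m < (gF B xstar w δ m).2 ∧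
      ‖(gF B xstar w δ m).1‖ * (1 + ‖w m‖) ≤ δ * (1/2)^m := by
  classical
  have hsh := shr_hF B xstar w δ hx m
  have h1w : (0:ℝ) < 1 + ‖w m‖ := by positivity
  have hpos : (0:ℝ) < δ * (1/2)^m / (1 + ‖w m‖) := by positivity
  have hev : ∀ᶠ n in atTop,
      ‖(hF B xstar w δ m).comp (ContinuousLinearMap.id ℝ X - B.proj n)‖
        < δ * (1/2)^m / (1 + ‖w m‖) := hsh.eventually_lt_const hpos
  obtain ⟨N, hN1, hN2⟩ := (hev.and (eventually_gt_atTop (prevF B xstar w δ m))).exists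
  have hcond : ∃ N, prevF B xstar w δ m < N ∧
      ‖(hF B xstar w δ m).comp (ContinuousLinearMap.id ℝ X - B.proj N)‖ * (1 + ‖w m‖)
        ≤ δ * (1/2)^m :=
    ⟨N, hN2, by rw [← le_div_iff₀ h1w]; exact hN1.le⟩
  have h2 : (gF B xstar w δ m).2 = hcond.choose := by
    rw [nmF_def, dif_pos hcond]
  constructor
  · rw [h2]; exact hcond.choose_spec.1
  · rw [gfun_eq, h2]; exact hcond.choose_spec.2

lemma exists_biorth (xstar : ℕ → X →L[ℝ] ℝ) (m : ℕ)
    (h : ((xstar m : X →ₗ[ℝ] ℝ)) ∉ Submodule.span ℝ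
      (Set.range fun k : Fin m => ((xstar k : X →ₗ[ℝ] ℝ)))) :
    ∃ v : X, (∀ k < m, xstar k v = 0) ∧ xstar m v = 1 := by
  have h2 : ¬ (⨅ i : Fin m, LinearMap.ker ((xstar i : X →ₗ[ℝ] ℝ))
      ≤ LinearMap.ker ((xstar m : X →ₗ[ℝ] ℝ))) :=
    fun hle => h (mem_span_of_iInf_ker_le_ker hle)
  rw [SetLike.not_le_iff_exists] at h2
  obtain ⟨v, hv1, hv2⟩ := h2
  have hvm : xstar m v ≠ 0 := by simpa [LinearMap.mem_ker] using hv2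
  refine ⟨(xstar m v)⁻¹ • v, fun k hk => ?_, ?_⟩
  · have hk0 : xstar k v = 0 := by
      have := (Submodule.mem_iInf _).1 hv1 ⟨k, hk⟩
      simpa [LinearMap.mem_ker] using this
    rw [map_smul, hk0, smul_zero]
  · rw [map_smul, smul_eq_mul, inv_mul_cancel₀ hvm]

end Aux

/-- Theorem 1.4: if a Schauder basis `(ẽ_n)` of a Banach space `X` is shrinking
with respect to each functional `x*_m`, then for every `ε > 0` there are an
increasing sequence `(n_m)` and a Schauder basis `(e_n)` of `X` with
`x*_m(e_n) = 0` for all `n ≥ n_m`, such that the operator `T` with `T ẽ_n = e_n`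
satisfies `‖id − T‖ < ε`. -/
theorem basis_annihilating_functionals {X : Type*} [NormedAddCommGroup X]
    [NormedSpace ℝ X] [CompleteSpace X] (B : RealSchauderBasis X)
    (xstar : ℕ → X →L[ℝ] ℝ)
    (hshr : ∀ m, Tendsto
      (fun n => ‖(xstar m).comp (ContinuousLinearMap.id ℝ X - B.proj n)‖) atTop (𝓝 0))
    (ε : ℝ) (hε : 0 < ε) :
    ∃ nm : ℕ → ℕ, StrictMono nm ∧
      ∃ B' : RealSchauderBasis X,
        (∀ m n, nm m ≤ n → xstar m (B'.e n) = 0) ∧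
        ∃ T : X →L[ℝ] X, (∀ n, T (B.e n) = B'.e n) ∧
          ‖ContinuousLinearMap.id ℝ X - T‖ < ε := by
  classical
  -- choose the (partial) biorthogonal vectors w
  have hw : ∀ m, ∃ v : X,
      (((xstar m : X →ₗ[ℝ] ℝ)) ∈ Submodule.span ℝ
        (Set.range fun k : Fin m => ((xstar k : X →ₗ[ℝ] ℝ))) → v = 0) ∧
      (((xstar m : X →ₗ[ℝ] ℝ)) ∉ Submodule.span ℝ
        (Set.range fun k : Fin m => ((xstar k : X →ₗ[ℝ] ℝ))) →
        (∀ k < m, xstar k v = 0) ∧ xstar m v = 1) := by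
    intro m
    by_cases h : ((xstar m : X →ₗ[ℝ] ℝ)) ∈ Submodule.span ℝ
        (Set.range fun k : Fin m => ((xstar k : X →ₗ[ℝ] ℝ)))
    · exact ⟨0, fun _ => rfl, fun h' => absurd h h'⟩
    · obtain ⟨v, hv⟩ := exists_biorth xstar m h
      exact ⟨v, fun h' => absurd h' h, fun _ => hv⟩
  choose w hw0 hw1 using hw
  set δ : ℝ := min ε 1 / 4 with hδdef
  have hmin : 0 < min ε 1 := lt_min hε one_pos
  have hδ : 0 < δ := by rw [hδdef]; linarith
  set nm : ℕ → ℕ := fun m => (gF B xstar w δ m).2 with hnm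
  set g : ℕ → X →L[ℝ] ℝ := fun m => (gF B xstar w δ m).1 with hg
  have hx : ∀ m, Shr B (xstar m) := hshr
  have hspec := nm_spec B xstar w hδ hx
  have hmono : StrictMono nm := by
    refine strictMono_nat_of_lt_succ fun m => lt_of_le_of_lt ?_ (hspec (m+1)).1
    exact Finset.single_le_sum (f := fun k => (gF B xstar w δ k).2)
      (fun _ _ => Nat.zero_le _) (Finset.mem_range.mpr (Nat.lt_succ_self m))
  -- summability and the perturbation S
  have hgb : ∀ m, ‖(g m).smulRight (w m)‖ ≤ δ * (1/2)^m := by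
    intro m
    rw [ContinuousLinearMap.norm_smulRight_apply]
    refine le_trans ?_ (hspec m).2
    have := norm_nonneg (g m)
    have := norm_nonneg (w m)
    nlinarith
  have hsumgeo : Summable (fun m : ℕ => δ * (1/2)^m) := summable_geometric_two.mul_left δ
  have hsumnorm : Summable (fun m => ‖(g m).smulRight (w m)‖) :=
    Summable.of_nonneg_of_le (fun _ => norm_nonneg _) hgb hsumgeo
  have hsum : Summable (fun m => (g m).smulRight (w m)) := hsumnorm.of_norm
  set S : X →L[ℝ] X := ∑' m, (g m).smulRight (w m) with hS
  have hSnorm : ‖S‖ ≤ δ * 2 := by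
    calc ‖S‖ ≤ ∑' m, ‖(g m).smulRight (w m)‖ := norm_tsum_le_tsum_norm hsumnorm
    _ ≤ ∑' m : ℕ, δ * (1/2)^m := Summable.tsum_le_tsum hgb hsumnorm hsumgeo
    _ = δ * 2 := by rw [tsum_mul_left, tsum_geometric_two]
  have hδ4 : δ ≤ 1/4 := by
    rw [hδdef]; have := min_le_right ε 1; linarith
  have hδε : δ ≤ ε/4 := by
    rw [hδdef]; have := min_le_left ε 1; linarith
  have hS1 : ‖S‖ < 1 := lt_of_le_of_lt hSnorm (by linarith)
  have hSε : ‖S‖ < ε := lt_of_le_of_lt hSnorm (by linarith)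
  -- pointwise evaluation of S
  have hSx : ∀ x : X, S x = ∑' m, g m (x) • w m := by
    intro x
    have := (ContinuousLinearMap.apply ℝ X x).map_tsum hsum
    simpa [ContinuousLinearMap.apply_apply] using this
  have key0 : ∀ m n : ℕ, n < nm m → g m (B.e n) = 0 := by
    intro m n h
    show (gF B xstar w δ m).1 (B.e n) = 0
    rw [gfun_eq, ContinuousLinearMap.comp_apply, idsub_e,
      if_neg (by exact Nat.not_le.mpr h), map_zero]
  have key1 : ∀ m n : ℕ, nm m ≤ n → g m (B.e n) = hF B xstar w δ m (B.e n) := by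
    intro m n h
    show (gF B xstar w δ m).1 (B.e n) = hF B xstar w δ m (B.e n)
    rw [gfun_eq, ContinuousLinearMap.comp_apply, idsub_e, if_pos h]
  have hhFapp : ∀ m (x : X), hF B xstar w δ m x
      = xstar m x - ∑ k ∈ Finset.range m, xstar m (w k) * g k x := by
    intro m x
    rw [hF]
    simp [ContinuousLinearMap.sub_apply, ContinuousLinearMap.coe_sum',
      Finset.sum_apply, ContinuousLinearMap.coe_smul', Pi.smul_apply, smul_eq_mul, hg]
  have hSe : ∀ n, S (B.e n) = ∑ m ∈ Finset.range (n+1), g m (B.e n) • w m := by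
    intro n
    rw [hSx]
    refine tsum_eq_sum fun m hm => ?_
    have hmn : n < m := by
      have := Finset.mem_range.not.mp hm
      omega
    have : n < nm m := lt_of_lt_of_le hmn (hmono.le_apply)
    rw [key0 m n this, zero_smul]
  set T : X →L[ℝ] X := ContinuousLinearMap.id ℝ X - S with hT
  -- the main annihilation property
  have hzero : ∀ j, ∀ n, nm j ≤ n → xstar j (T (B.e n)) = 0 := by
    intro j
    induction j using Nat.strong_induction_on with
    | _ j IH =>
      intro n hn
      by_cases hdj : ((xstar j : X →ₗ[ℝ] ℝ)) ∈ Submodule.span ℝ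
          (Set.range fun k : Fin j => ((xstar k : X →ₗ[ℝ] ℝ)))
      · obtain ⟨c, hc⟩ := (Submodule.mem_span_range_iff_exists_fun ℝ).1 hdj
        have hc' := DFunLike.congr_fun hc (T (B.e n))
        simp only [LinearMap.coe_sum, Finset.sum_apply, LinearMap.smul_apply,
          ContinuousLinearMap.coe_coe, smul_eq_mul] at hc'
        rw [← hc']
        refine Finset.sum_eq_zero fun i _ => ?_
        have hi0 : xstar i.1 (T (B.e n)) = 0 :=
          IH i.1 i.2 n (le_trans (hmono i.2).le hn)
        rw [hi0, mul_zero]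
      · have hwj := hw1 j hdj
        rw [hT, ContinuousLinearMap.sub_apply, ContinuousLinearMap.id_apply, map_sub]
        rw [hSe n, map_sum]
        simp only [map_smul, smul_eq_mul]
        have hjn : j + 1 ≤ n + 1 := by
          have : j ≤ nm j := hmono.le_apply
          have := le_trans this hn
          omega
        have hsub : Finset.range (j+1) ⊆ Finset.range (n+1) :=
          Finset.range_subset_range.mpr hjn
        rw [← Finset.sum_subset hsub (fun m hmn hmj => ?_)]
        · rw [Finset.sum_range_succ, key1 j n hn, hhFapp, hwj.2, mul_one]
          have hcomm : ∑ m ∈ Finset.range j, g m (B.e n) * xstar j (w m)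
              = ∑ k ∈ Finset.range j, xstar j (w k) * g k (B.e n) :=
            Finset.sum_congr rfl fun k _ => mul_comm _ _
          rw [hcomm]
          ring
        · -- m ≤ n, m > j : xstar j (w m) = 0
          have hjm : j < m := by
            have := Finset.mem_range.not.mp hmj
            omega
          by_cases hdm : ((xstar m : X →ₗ[ℝ] ℝ)) ∈ Submodule.span ℝ
              (Set.range fun k : Fin m => ((xstar k : X →ₗ[ℝ] ℝ)))
          · rw [hw0 m hdm]
            simp
          · rw [(hw1 m hdm).1 j hjm, mul_zero]
  -- invertibility of T
  set u : (X →L[ℝ] X)ˣ := Units.oneSub S hS1 with hu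
  have hTu : T = (u : X →L[ℝ] X) := by
    rw [hT]
    have : (u : X →L[ℝ] X) = 1 - S := rfl
    rw [this, ← ContinuousLinearMap.one_def]
  have hTinv : ∀ x : X, T (((u⁻¹ : (X →L[ℝ] X)ˣ) : X →L[ℝ] X) x) = x := by
    intro x
    rw [hTu, ← ContinuousLinearMap.mul_apply, u.mul_inv, ContinuousLinearMap.one_apply]
  have hinvT : ∀ x : X, ((u⁻¹ : (X →L[ℝ] X)ˣ) : X →L[ℝ] X) (T x) = x := by
    intro x
    rw [hTu, ← ContinuousLinearMap.mul_apply, u.inv_mul, ContinuousLinearMap.one_apply]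
  refine ⟨nm, hmono,
    ⟨{ e := fun n => T (B.e n)
       coord := fun k => (B.coord k).comp ((u⁻¹ : (X →L[ℝ] X)ˣ) : X →L[ℝ] X)
       expand := ?_
       biorth := ?_ }, ?_, T, fun n => rfl, ?_⟩⟩
  · -- expand
    intro x
    set v : X := ((u⁻¹ : (X →L[ℝ] X)ˣ) : X →L[ℝ] X) x with hv
    have hpt : ∀ n, ∑ k ∈ Finset.range n,
        ((B.coord k).comp ((u⁻¹ : (X →L[ℝ] X)ˣ) : X →L[ℝ] X)) x • T (B.e k)
        = T (∑ k ∈ Finset.range n, B.coord k v • B.e k) := by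
      intro n
      rw [map_sum]
      exact Finset.sum_congr rfl fun k _ => by
        rw [map_smul, ContinuousLinearMap.comp_apply]
    have hlim : Tendsto (fun n => T (∑ k ∈ Finset.range n, B.coord k v • B.e k))
        atTop (𝓝 (T v)) := (T.continuous.tendsto v).comp (B.expand v)
    rw [hv, hTinv] at hlim
    exact hlim.congr fun n => (hpt n).symm
  · -- biorth
    intro k m
    simp only [ContinuousLinearMap.comp_apply]
    rw [hinvT]
    exact B.biorth k m
  · -- zeros
    exact fun m n h => hzero m n h
  · -- norm bound
    rw [hT, sub_sub_cancel]
    exact hSε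
end

section
/- Let w : ℝ → (0,∞) be a continuous fast-growing weight. Define α(s) = log s for s ∈ (0,1] and S f(s) = f(α(s)) w(α(s))/s. Then S is an isometric isomorphism from L^{1,−}_w(ℝ) (weighted L¹ functions supported in (-∞,0]) onto L¹(0,1), and for every m ≥ 1, J^m f = ∫_0^1 (Sf)(s) · (−α(s))^{m−1}/((m−1)! w(α(s))) ds. -/
open MeasureTheory Set Real

/-- The substitution operator `S f(s) = f(log s) w(log s)/s`. -/
noncomputable def subOp (w : ℝ → ℝ) (f : ℝ → ℝ) : ℝ → ℝ :=
  fun s => f (Real.log s) * w (Real.log s) / s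

lemma exp_image_Iio : Real.exp '' Iio (0:ℝ) = Ioo (0:ℝ) 1 := by
  ext y
  constructor
  · rintro ⟨x, hx, rfl⟩
    exact ⟨Real.exp_pos x, Real.exp_lt_one_iff.mpr hx⟩
  · rintro ⟨hy0, hy1⟩
    exact ⟨Real.log y, Real.log_neg hy0 hy1, Real.exp_log hy0⟩

lemma cov_iff (g : ℝ → ℝ) :
    IntegrableOn g (Ioo (0:ℝ) 1) ↔
      IntegrableOn (fun x => Real.exp x * g (Real.exp x)) (Iio (0:ℝ)) := by
  rw [← exp_image_Iio]
  rw [MeasureTheory.integrableOn_image_iff_integrableOn_abs_deriv_smul measurableSet_Iio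
    (fun x _ => (Real.hasDerivAt_exp x).hasDerivWithinAt) (Real.exp_injective.injOn)]
  simp only [smul_eq_mul, abs_of_pos (Real.exp_pos _)]

lemma cov_eq (g : ℝ → ℝ) :
    ∫ s in Ioo (0:ℝ) 1, g s = ∫ x in Iio (0:ℝ), Real.exp x * g (Real.exp x) := by
  rw [← exp_image_Iio]
  rw [MeasureTheory.integral_image_eq_integral_abs_deriv_smul measurableSet_Iio
    (fun x _ => (Real.hasDerivAt_exp x).hasDerivWithinAt) (Real.exp_injective.injOn) g]
  simp only [smul_eq_mul, abs_of_pos (Real.exp_pos _)]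

lemma restrict_Iio_eq_Iic :
    (volume : Measure ℝ).restrict (Iio (0:ℝ)) = volume.restrict (Iic (0:ℝ)) :=
  Measure.restrict_congr_set Iio_ae_eq_Iic

/-- The operator `S f(s) = f(log s) w(log s)/s` is an isometric isomorphism from
`L^{1,−}_w(ℝ)` onto `L¹(0,1)`: it preserves integrability and the norm, it is
surjective onto `L¹(0,1)`, and `J^m f = ∫_0^1 (Sf)(s) (−log s)^{m−1}/((m−1)! w(log s)) ds`
for every `m ≥ 1`.  (Linearity of `S` is evident from the formula.) -/
theorem subOp_isometric_iso (w : ℝ → ℝ) (hw_pos : ∀ x, 0 < w x)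
    (hw_cont : Continuous w)
    (hw_fast : ∀ k : ℕ, ∃ C : ℝ, ∀ x : ℝ, (1 + |x|) ^ k ≤ C * w x) :
    -- isometry: `S` maps `L^{1,−}_w(ℝ)` into `L¹(0,1)` preserving the norm
    (∀ f : ℝ → ℝ, Measurable f → Function.support f ⊆ Iic (0 : ℝ) →
      ((IntegrableOn (subOp w f) (Ioo (0 : ℝ) 1) ↔ Integrable (fun x => |f x| * w x)) ∧
        (Integrable (fun x => |f x| * w x) →
          ∫ s in Ioo (0 : ℝ) 1, |subOp w f s| = ∫ x : ℝ, |f x| * w x))) ∧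
    -- surjectivity onto `L¹(0,1)`
    (∀ g : ℝ → ℝ, IntegrableOn g (Ioo (0 : ℝ) 1) →
      ∃ f : ℝ → ℝ, Measurable f ∧ Function.support f ⊆ Iic (0 : ℝ) ∧
        Integrable (fun x => |f x| * w x) ∧
        ∀ᵐ s : ℝ, s ∈ Ioo (0 : ℝ) 1 → subOp w f s = g s) ∧
    -- the formula for `J^m`
    (∀ f : ℝ → ℝ, Measurable f → Function.support f ⊆ Iic (0 : ℝ) →
      Integrable (fun x => |f x| * w x) →
      ∀ m : ℕ, 1 ≤ m →
        (1 / (Nat.factorial (m - 1) : ℝ)) * ∫ y in Iic (0 : ℝ), (-y) ^ (m - 1) * f y =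
          ∫ s in Ioo (0 : ℝ) 1,
            subOp w f s * ((-Real.log s) ^ (m - 1) /
              ((Nat.factorial (m - 1) : ℝ) * w (Real.log s)))) := by
  refine ⟨?_, ?_, ?_⟩
  · -- isometry
    intro f hf hsupp
    have key : ∀ x : ℝ, Real.exp x * subOp w f (Real.exp x) = f x * w x := by
      intro x
      simp only [subOp, Real.log_exp]
      field_simp
    have keyabs : (fun x => Real.exp x * |subOp w f (Real.exp x)|) =
        fun x => |f x| * w x := by
      funext x
      have h1 : Real.exp x * |subOp w f (Real.exp x)| =
          |Real.exp x * subOp w f (Real.exp x)| := by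
        rw [abs_mul, abs_of_pos (Real.exp_pos x)]
      rw [h1, key, abs_mul, abs_of_pos (hw_pos x)]
    have hsupp' : Function.support (fun x => f x * w x) ⊆ Iic (0 : ℝ) := by
      intro x hx
      apply hsupp
      intro h0
      simp [Function.mem_support, h0] at hx
    have hsupp'' : Function.support (fun x => |f x| * w x) ⊆ Iic (0 : ℝ) := by
      intro x hx
      apply hsupp
      intro h0
      simp [Function.mem_support, h0] at hx
    have habs_iff : Integrable (fun x => f x * w x) ↔
        Integrable (fun x => |f x| * w x) := by
      have : (fun x => |f x| * w x) = fun x => ‖f x * w x‖ := by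
        funext x; rw [Real.norm_eq_abs, abs_mul, abs_of_pos (hw_pos x)]
      rw [this]
      exact (integrable_norm_iff
        ((hf.mul hw_cont.measurable).aestronglyMeasurable)).symm
    constructor
    · rw [cov_iff]
      have : (fun x => Real.exp x * subOp w f (Real.exp x)) = fun x => f x * w x :=
        funext key
      rw [this, IntegrableOn, restrict_Iio_eq_Iic,
        ← IntegrableOn, integrableOn_iff_integrable_of_support_subset hsupp']
      exact habs_iff
    · intro hint
      rw [cov_eq (fun s => |subOp w f s|), keyabs, restrict_Iio_eq_Iic]
      exact setIntegral_eq_integral_of_forall_compl_eq_zero fun x hx => by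
        simp [Function.notMem_support.mp fun h => hx (hsupp'' h)]
  · -- surjectivity
    intro g hg
    have hgm := hg.aestronglyMeasurable
    set G := hgm.mk g with hG
    have hGm : StronglyMeasurable G := hgm.stronglyMeasurable_mk
    have hgG : g =ᵐ[volume.restrict (Ioo (0:ℝ) 1)] G := hgm.ae_eq_mk
    refine ⟨fun x => if x < 0 then G (Real.exp x) * Real.exp x / w x else 0,
      ?_, ?_, ?_, ?_⟩
    · exact Measurable.ite measurableSet_Iio
        (((hGm.measurable.comp Real.measurable_exp).mul Real.measurable_exp).div
          hw_cont.measurable) measurable_const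
    · intro x hx
      simp only [Function.mem_support] at hx
      by_contra h0
      simp only [mem_Iic, not_le] at h0
      rw [if_neg (asymm h0)] at hx
      exact hx rfl
    · have heq : (fun x => |if x < 0 then G (Real.exp x) * Real.exp x / w x else 0| * w x)
          = (Iio (0:ℝ)).indicator (fun x => Real.exp x * |G (Real.exp x)|) := by
        funext x
        by_cases hx : x < 0
        · rw [if_pos hx, indicator_of_mem (by exact hx), abs_div, abs_mul,
            abs_of_pos (Real.exp_pos x), abs_of_pos (hw_pos x)]
          field_simp [(hw_pos x).ne']
        · rw [if_neg hx, indicator_of_notMem (by exact hx)]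
          simp
      rw [heq, integrable_indicator_iff measurableSet_Iio]
      have : IntegrableOn (fun s => |G s|) (Ioo (0:ℝ) 1) :=
        (hg.congr hgG).abs
      exact (cov_iff fun s => |G s|).mp this
    · have hae : ∀ᵐ s : ℝ, s ∈ Ioo (0:ℝ) 1 → g s = G s :=
        (ae_restrict_iff' measurableSet_Ioo).mp hgG
      filter_upwards [hae] with s hs hmem
      have hlog : Real.log s < 0 := Real.log_neg hmem.1 hmem.2
      simp only [subOp, if_pos hlog, Real.exp_log hmem.1]
      rw [hs hmem]
      field_simp [hmem.1.ne', (hw_pos (Real.log s)).ne']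
  · -- formula for J^m
    intro f hf hsupp hint m hm
    have hc : ((Nat.factorial (m - 1) : ℝ)) ≠ 0 :=
      Nat.cast_ne_zero.mpr (Nat.factorial_pos _).ne'
    rw [cov_eq (fun s => subOp w f s * ((-Real.log s) ^ (m - 1) /
        ((Nat.factorial (m - 1) : ℝ) * w (Real.log s))))]
    have key : (fun x => Real.exp x * (subOp w f (Real.exp x) *
        ((-Real.log (Real.exp x)) ^ (m - 1) /
          ((Nat.factorial (m - 1) : ℝ) * w (Real.log (Real.exp x)))))) =
        fun x => (1 / (Nat.factorial (m - 1) : ℝ)) * ((-x) ^ (m - 1) * f x) := by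
      funext x
      simp only [subOp, Real.log_exp]
      field_simp [Real.exp_ne_zero, (hw_pos x).ne', hc]
    rw [key, integral_const_mul, restrict_Iio_eq_Iic]
end
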